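/- arXiv:math-ph/0311024 — 2 statements merged into one kernel-verified Lean document; each statement's English description precedes it below -/
import Mathlib

section
/- Fix integers 1 ≤ d ≤ d' and a real s ≥ d. Let A and B be bounded subsets of ℝ^{d'} with dist(A,B) = inf{|a−b| : a ∈ A, b ∈ B} > 0, and set ḡ_A = limsup_{N→∞} ℰ_s(A,N)/τ_{s,d}(N) and ḡ_B = limsup_{N→∞} ℰ_s(B,N)/τ_{s,d}(N), taken in [0,∞]. Then limsup_{N→∞} ℰ_s(A∪B,N)/τ_{s,d}(N) ≤ (ḡ_A^{−d/s} + ḡ_B^{−d/s})^{−s/d}, where the right-hand side is interpreted in [0,∞] with the conventions ∞^{−d/s} = 0 and 0^{−d/s} = ∞ (in particular it is 0 if ḡ_A = 0 or ḡ_B = 0). -/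
open scoped ENNReal NNReal BigOperators Classical
open MeasureTheory Filter Metric Set Topology

/-- The Riesz `s`-energy of a finite configuration `ω`, valued in `[0,∞]`. -/
noncomputable def rieszEnergy {E : Type*} [PseudoEMetricSpace E] (s : ℝ) (ω : Finset E) : ℝ≥0∞ :=
  ∑ x ∈ ω, ∑ y ∈ ω, if x = y then 0 else edist x y ^ (-s)

/-- The `N`-point minimal Riesz `s`-energy over a set `A` (infimum over all `N`-point
subsets of `A`; `∞` if there is none). -/
noncomputable def minRieszEnergy {E : Type*} [PseudoEMetricSpace E] (s : ℝ) (A : Set E)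
    (N : ℕ) : ℝ≥0∞ :=
  ⨅ (ω : Finset E) (_ : ↑ω ⊆ A) (_ : ω.card = N), rieszEnergy s ω

/-- The normalizing sequence `τ_{s,d}(N)`: `N^{1+s/d}` for `s > d` and `N² log N` for `s = d`. -/
noncomputable def tauNorm (s : ℝ) (d : ℕ) (N : ℕ) : ℝ :=
  if s = (d : ℝ) then (N : ℝ) ^ 2 * Real.log N else (N : ℝ) ^ (1 + s / (d : ℝ))

/- ## Auxiliary lemmas -/

lemma minRieszEnergy_anti {X : Type*} [PseudoEMetricSpace X] (s : ℝ) {A A' : Set X}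
    (h : A ⊆ A') (N : ℕ) : minRieszEnergy s A' N ≤ minRieszEnergy s A N := by
  refine le_iInf fun ω => le_iInf fun hω => le_iInf fun hc => ?_
  exact iInf_le_of_le ω (iInf_le_of_le (hω.trans h) (iInf_le_of_le hc le_rfl))

lemma cross_term_le {X : Type*} [PseudoMetricSpace X] {s δ : ℝ} (hs : 0 ≤ s) (hδ : 0 < δ)
    {a b : X} (h : δ ≤ dist a b) :
    (if a = b then 0 else edist a b ^ (-s)) ≤ ENNReal.ofReal δ ^ (-s) := by
  have hab : a ≠ b := by
    rintro rfl
    simp only [dist_self] at h; linarith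
  rw [if_neg hab, ENNReal.rpow_neg, ENNReal.rpow_neg]
  refine ENNReal.inv_le_inv.2 (ENNReal.rpow_le_rpow ?_ hs)
  rw [edist_dist]
  exact ENNReal.ofReal_le_ofReal h

lemma rieszEnergy_union_le {X : Type*} [PseudoMetricSpace X] {s δ : ℝ} (hs : 0 ≤ s) (hδ : 0 < δ)
    (ωA ωB : Finset X) (hsep : ∀ a ∈ ωA, ∀ b ∈ ωB, δ ≤ dist a b) :
    rieszEnergy s (ωA ∪ ωB) ≤ rieszEnergy s ωA + rieszEnergy s ωB
      + ((ωA.card * ωB.card : ℕ) + (ωA.card * ωB.card : ℕ) : ℝ≥0∞) * ENNReal.ofReal δ ^ (-s) := by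
  classical
  have hdisj : Disjoint ωA ωB := by
    rw [Finset.disjoint_left]
    intro x hxA hxB
    have := hsep x hxA x hxB
    simp only [dist_self] at this; linarith
  set f : X → X → ℝ≥0∞ := fun x y => if x = y then 0 else edist x y ^ (-s) with hf
  set C := ENNReal.ofReal δ ^ (-s) with hC
  have cross1 : ∑ x ∈ ωA, ∑ y ∈ ωB, f x y ≤ (ωA.card * ωB.card : ℕ) * C := by
    calc ∑ x ∈ ωA, ∑ y ∈ ωB, f x y ≤ ∑ _x ∈ ωA, ∑ _y ∈ ωB, C := by
          refine Finset.sum_le_sum fun x hx => Finset.sum_le_sum fun y hy => ?_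
          exact cross_term_le hs hδ (hsep x hx y hy)
      _ = (ωA.card * ωB.card : ℕ) * C := by
          simp only [Finset.sum_const, nsmul_eq_mul, Nat.cast_mul]
          ring
  have cross2 : ∑ x ∈ ωB, ∑ y ∈ ωA, f x y ≤ (ωA.card * ωB.card : ℕ) * C := by
    calc ∑ x ∈ ωB, ∑ y ∈ ωA, f x y ≤ ∑ _x ∈ ωB, ∑ _y ∈ ωA, C := by
          refine Finset.sum_le_sum fun x hx => Finset.sum_le_sum fun y hy => ?_
          have : δ ≤ dist y x := hsep y hy x hx
          have h' : δ ≤ dist x y := by rwa [dist_comm]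
          exact cross_term_le hs hδ h'
      _ = (ωA.card * ωB.card : ℕ) * C := by
          simp only [Finset.sum_const, nsmul_eq_mul, Nat.cast_mul]
          ring
  have expand : rieszEnergy s (ωA ∪ ωB)
      = rieszEnergy s ωA + rieszEnergy s ωB
        + (∑ x ∈ ωA, ∑ y ∈ ωB, f x y + ∑ x ∈ ωB, ∑ y ∈ ωA, f x y) := by
    unfold rieszEnergy
    rw [Finset.sum_union hdisj]
    simp only [Finset.sum_union hdisj, Finset.sum_add_distrib]
    ring
  rw [expand]
  push_cast
  have := add_le_add cross1 cross2
  push_cast at this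
  calc rieszEnergy s ωA + rieszEnergy s ωB + (∑ x ∈ ωA, ∑ y ∈ ωB, f x y + ∑ x ∈ ωB, ∑ y ∈ ωA, f x y)
      ≤ rieszEnergy s ωA + rieszEnergy s ωB + ((ωA.card * ωB.card : ℝ≥0∞) * C + (ωA.card * ωB.card : ℝ≥0∞) * C) :=
        add_le_add_right this _
    _ = rieszEnergy s ωA + rieszEnergy s ωB + ((ωA.card : ℝ≥0∞) * ωB.card + (ωA.card : ℝ≥0∞) * ωB.card) * C := by
        ring

lemma minRieszEnergy_union_le {X : Type*} [PseudoMetricSpace X] {s δ : ℝ} (hs : 0 ≤ s)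
    (hδ : 0 < δ) {A B : Set X} (hsep : ∀ a ∈ A, ∀ b ∈ B, δ ≤ dist a b) (m n : ℕ) :
    minRieszEnergy s (A ∪ B) (m + n) ≤ minRieszEnergy s A m + minRieszEnergy s B n
      + ((m * n : ℕ) + (m * n : ℕ) : ℝ≥0∞) * ENNReal.ofReal δ ^ (-s) := by
  classical
  set C := ENNReal.ofReal δ ^ (-s) with hC
  have hCne : C ≠ ⊤ := by
    rw [hC, ENNReal.rpow_neg]
    simp only [ne_eq, ENNReal.inv_eq_top]
    intro h
    rw [ENNReal.rpow_eq_zero_iff] at h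
    rcases h with ⟨h0, -⟩ | ⟨htop, -⟩
    · exact absurd h0 (by simp [ENNReal.ofReal_eq_zero]; linarith)
    · exact absurd htop (by simp)
  set X1 := minRieszEnergy s A m with hX1
  set X2 := minRieszEnergy s B n with hX2
  rcases eq_or_ne X1 ⊤ with h1 | h1
  · rw [h1]; simp
  rcases eq_or_ne X2 ⊤ with h2 | h2
  · rw [h2]; simp
  refine ENNReal.le_of_forall_pos_le_add fun ε hε _ => ?_
  have hε2 : ((ε : ℝ≥0∞) / 2) ≠ 0 := by
    simp [ENNReal.div_eq_zero_iff, hε.ne']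
  -- pick near-optimal configurations
  have hx1 : X1 < X1 + (ε : ℝ≥0∞) / 2 := ENNReal.lt_add_right h1 hε2
  have hx2 : X2 < X2 + (ε : ℝ≥0∞) / 2 := ENNReal.lt_add_right h2 hε2
  rw [hX1, minRieszEnergy, iInf_lt_iff] at hx1
  obtain ⟨ωA, hx1⟩ := hx1
  rw [iInf_lt_iff] at hx1
  obtain ⟨hωA, hx1⟩ := hx1
  rw [iInf_lt_iff] at hx1
  obtain ⟨hcA, hx1⟩ := hx1
  rw [hX2, minRieszEnergy, iInf_lt_iff] at hx2
  obtain ⟨ωB, hx2⟩ := hx2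
  rw [iInf_lt_iff] at hx2
  obtain ⟨hωB, hx2⟩ := hx2
  rw [iInf_lt_iff] at hx2
  obtain ⟨hcB, hx2⟩ := hx2
  have hsep' : ∀ a ∈ ωA, ∀ b ∈ ωB, δ ≤ dist a b := fun a ha b hb =>
    hsep a (hωA ha) b (hωB hb)
  have hdisj : Disjoint ωA ωB := by
    rw [Finset.disjoint_left]
    intro x hxA hxB
    have := hsep' x hxA x hxB
    simp only [dist_self] at this; linarith
  have hsub : ↑(ωA ∪ ωB) ⊆ A ∪ B := by
    push_cast
    exact Set.union_subset_union hωA hωB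
  have hcard : (ωA ∪ ωB).card = m + n := by
    rw [Finset.card_union_of_disjoint hdisj, hcA, hcB]
  have hle : minRieszEnergy s (A ∪ B) (m + n) ≤ rieszEnergy s (ωA ∪ ωB) :=
    iInf_le_of_le (ωA ∪ ωB) (iInf_le_of_le hsub (iInf_le_of_le hcard le_rfl))
  have hbound := rieszEnergy_union_le hs hδ ωA ωB hsep'
  rw [hcA, hcB] at hbound
  calc minRieszEnergy s (A ∪ B) (m + n) ≤ rieszEnergy s (ωA ∪ ωB) := hle
    _ ≤ rieszEnergy s ωA + rieszEnergy s ωB + ((m * n : ℕ) + (m * n : ℕ) : ℝ≥0∞) * C := hbound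
    _ ≤ (X1 + (ε : ℝ≥0∞) / 2) + (X2 + (ε : ℝ≥0∞) / 2) + ((m * n : ℕ) + (m * n : ℕ) : ℝ≥0∞) * C :=
        add_le_add_left (add_le_add hx1.le hx2.le) _
    _ = X1 + X2 + ((m * n : ℕ) + (m * n : ℕ) : ℝ≥0∞) * C + ((ε : ℝ≥0∞) / 2 + (ε : ℝ≥0∞) / 2) := by
        ring
    _ = X1 + X2 + ((m * n : ℕ) + (m * n : ℕ) : ℝ≥0∞) * C + (ε : ℝ≥0∞) := by
        rw [ENNReal.add_halves]

lemma tauNorm_pos {s : ℝ} {d : ℕ} (hd : 1 ≤ d) (hs : (d : ℝ) ≤ s) {N : ℕ} (hN : 2 ≤ N) :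
    0 < tauNorm s d N := by
  have hN0 : (0 : ℝ) < N := by positivity
  unfold tauNorm
  split_ifs with h
  · have : (1 : ℝ) < N := by exact_mod_cast Nat.lt_of_lt_of_le one_lt_two hN
    have := Real.log_pos this
    positivity
  · positivity

lemma tendsto_tau_ratio {s : ℝ} {d : ℕ} (hd : 1 ≤ d) (hs : (d : ℝ) ≤ s)
    {φ : ℕ → ℕ} {β : ℝ} (hβ : 0 < β)
    (hφ : Filter.Tendsto (fun N => (φ N : ℝ) / N) atTop (nhds β))
    (hφtop : Filter.Tendsto φ atTop atTop) :
    Filter.Tendsto (fun N => tauNorm s d (φ N) / tauNorm s d N) atTop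
      (nhds (β ^ (1 + s / (d : ℝ)))) := by
  have hd0 : (0 : ℝ) < d := by exact_mod_cast hd
  rcases eq_or_lt_of_le hs with hsd | hsd
  · -- s = d case
    have hss : s = (d : ℝ) := hsd.symm
    have hexp : 1 + s / (d : ℝ) = 2 := by rw [hss]; field_simp; norm_num
    rw [hexp]
    have hβ2 : β ^ (2 : ℝ) = β ^ (2 : ℕ) := by
      rw [← Real.rpow_natCast]; norm_num
    rw [hβ2]
    -- ratio of logs tends to 1
    have hlogratio : Filter.Tendsto (fun N => Real.log (φ N) / Real.log N) atTop (nhds 1) := by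
      have h1 : Filter.Tendsto (fun N : ℕ => Real.log ((φ N : ℝ) / N)) atTop
          (nhds (Real.log β)) := hφ.log hβ.ne'
      have h2 : Filter.Tendsto (fun N : ℕ => Real.log ((φ N : ℝ) / N) / Real.log N) atTop
          (nhds 0) :=
        h1.div_atTop (Real.tendsto_log_atTop.comp tendsto_natCast_atTop_atTop)
      have h3 : Filter.Tendsto (fun N : ℕ => Real.log ((φ N : ℝ) / N) / Real.log N + 1) atTop
          (nhds 1) := by
        simpa using h2.add tendsto_const_nhds
      refine h3.congr' ?_
      filter_upwards [hφtop.eventually_ge_atTop 1, Filter.eventually_ge_atTop 2] with N hφ1 hN2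
      have hφpos : (0 : ℝ) < φ N := by exact_mod_cast hφ1
      have hNpos : (0 : ℝ) < N := by positivity
      have hlogN : Real.log N ≠ 0 := by
        have : (1 : ℝ) < N := by exact_mod_cast hN2
        exact (Real.log_pos this).ne'
      rw [Real.log_div hφpos.ne' hNpos.ne']
      field_simp
      ring
    have hsq : Filter.Tendsto (fun N => ((φ N : ℝ) / N) ^ (2 : ℕ)) atTop (nhds (β ^ (2 : ℕ))) :=
      hφ.pow 2
    have := hsq.mul hlogratio
    rw [mul_one] at this
    refine this.congr' ?_
    filter_upwards [hφtop.eventually_ge_atTop 2, Filter.eventually_ge_atTop 2] with N hφ2 hN2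
    have hφpos : (0 : ℝ) < φ N := by positivity
    have hNpos : (0 : ℝ) < N := by positivity
    have hlogN : Real.log N ≠ 0 := by
      have : (1 : ℝ) < N := by exact_mod_cast hN2
      exact (Real.log_pos this).ne'
    simp only [tauNorm, if_pos hss]
    field_simp
  · -- s > d case
    have hne : s ≠ (d : ℝ) := hsd.ne'
    have hs0 : (0 : ℝ) < s := lt_of_lt_of_le hd0 hs
    have hp : 0 ≤ 1 + s / (d : ℝ) := by positivity
    have h1 : Filter.Tendsto (fun N => ((φ N : ℝ) / N) ^ (1 + s / (d : ℝ))) atTop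
        (nhds (β ^ (1 + s / (d : ℝ)))) := hφ.rpow_const (Or.inr hp)
    refine h1.congr' ?_
    filter_upwards [Filter.eventually_ge_atTop 1] with N hN1
    have hNpos : (0 : ℝ) < N := by positivity
    simp only [tauNorm, if_neg hne]
    rw [Real.div_rpow (by positivity) (by positivity)]

lemma tendsto_sq_div_tau {s : ℝ} {d : ℕ} (hd : 1 ≤ d) (hs : (d : ℝ) ≤ s) :
    Filter.Tendsto (fun N : ℕ => (N : ℝ) ^ 2 / tauNorm s d N) atTop (nhds 0) := by
  have hd0 : (0 : ℝ) < d := by exact_mod_cast hd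
  rcases eq_or_lt_of_le hs with hsd | hsd
  · have hss : s = (d : ℝ) := hsd.symm
    have h1 : Filter.Tendsto (fun N : ℕ => (Real.log N)⁻¹) atTop (nhds 0) :=
      (Real.tendsto_log_atTop.comp tendsto_natCast_atTop_atTop).inv_tendsto_atTop
    refine h1.congr' ?_
    filter_upwards [Filter.eventually_ge_atTop 2] with N hN2
    have hNpos : (0 : ℝ) < N := by positivity
    have hlogN : Real.log N ≠ 0 := by
      have : (1 : ℝ) < N := by exact_mod_cast hN2
      exact (Real.log_pos this).ne'
    simp only [tauNorm, if_pos hss]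
    field_simp
  · have hne : s ≠ (d : ℝ) := hsd.ne'
    have hpos : 0 < s / (d : ℝ) - 1 := by
      rw [sub_pos, lt_div_iff₀ hd0, one_mul]; exact hsd
    have h1 : Filter.Tendsto (fun x : ℝ => x ^ (-(s / (d : ℝ) - 1))) atTop (nhds 0) :=
      tendsto_rpow_neg_atTop hpos
    have h2 : Filter.Tendsto (fun N : ℕ => ((N : ℝ)) ^ (-(s / (d : ℝ) - 1))) atTop (nhds 0) :=
      h1.comp tendsto_natCast_atTop_atTop
    refine h2.congr' ?_
    filter_upwards [Filter.eventually_ge_atTop 1] with N hN1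
    have hNpos : (0 : ℝ) < N := by positivity
    simp only [tauNorm, if_neg hne]
    rw [show ((N : ℝ)) ^ 2 = (N : ℝ) ^ (2 : ℝ) by rw [← Real.rpow_natCast]; norm_num,
      ← Real.rpow_sub hNpos]
    congr 1
    ring

lemma tendsto_tau_ratio_ennreal {s : ℝ} {d : ℕ} (hd : 1 ≤ d) (hs : (d : ℝ) ≤ s)
    {φ : ℕ → ℕ} {β : ℝ} (hβ : 0 < β)
    (hφ : Filter.Tendsto (fun N => (φ N : ℝ) / N) atTop (nhds β))
    (hφtop : Filter.Tendsto φ atTop atTop) :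
    Filter.Tendsto
      (fun N => ENNReal.ofReal (tauNorm s d (φ N)) / ENNReal.ofReal (tauNorm s d N)) atTop
      (nhds (ENNReal.ofReal (β ^ (1 + s / (d : ℝ))))) := by
  have h1 := ENNReal.tendsto_ofReal (tendsto_tau_ratio hd hs hβ hφ hφtop)
  refine h1.congr' ?_
  filter_upwards [Filter.eventually_ge_atTop 2] with N hN2
  rw [ENNReal.ofReal_div_of_pos (tauNorm_pos hd hs hN2)]

lemma key_alpha {X : Type*} [PseudoMetricSpace X] {d : ℕ} (hd : 1 ≤ d) {s : ℝ}
    (hs : (d : ℝ) ≤ s) {A B : Set X} {δ : ℝ} (hδ : 0 < δ)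
    (hsep : ∀ a ∈ A, ∀ b ∈ B, δ ≤ dist a b)
    (hgA : (atTop.limsup fun N : ℕ =>
      minRieszEnergy s A N / ENNReal.ofReal (tauNorm s d N)) ≠ ⊤)
    (hgB : (atTop.limsup fun N : ℕ =>
      minRieszEnergy s B N / ENNReal.ofReal (tauNorm s d N)) ≠ ⊤)
    {α : ℝ} (hα0 : 0 < α) (hα1 : α < 1) :
    (atTop.limsup fun N : ℕ =>
        minRieszEnergy s (A ∪ B) N / ENNReal.ofReal (tauNorm s d N)) ≤
      (atTop.limsup fun N : ℕ =>
          minRieszEnergy s A N / ENNReal.ofReal (tauNorm s d N)) *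
        ENNReal.ofReal (α ^ (1 + s / (d : ℝ))) +
      (atTop.limsup fun N : ℕ =>
          minRieszEnergy s B N / ENNReal.ofReal (tauNorm s d N)) *
        ENNReal.ofReal ((1 - α) ^ (1 + s / (d : ℝ))) := by
  classical
  have hd0 : (0 : ℝ) < d := by exact_mod_cast hd
  have hs0 : (0 : ℝ) < s := lt_of_lt_of_le hd0 hs
  have hp : 0 ≤ 1 + s / (d : ℝ) := by positivity
  set gA := atTop.limsup fun N : ℕ =>
    minRieszEnergy s A N / ENNReal.ofReal (tauNorm s d N) with hgAdef
  set gB := atTop.limsup fun N : ℕ =>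
    minRieszEnergy s B N / ENNReal.ofReal (tauNorm s d N) with hgBdef
  set cα := ENNReal.ofReal (α ^ (1 + s / (d : ℝ))) with hcα
  set cβ := ENNReal.ofReal ((1 - α) ^ (1 + s / (d : ℝ))) with hcβ
  have hcα1 : cα ≤ 1 := by
    rw [hcα, ← ENNReal.ofReal_one]
    exact ENNReal.ofReal_le_ofReal (Real.rpow_le_one hα0.le hα1.le hp)
  have hcβ1 : cβ ≤ 1 := by
    rw [hcβ, ← ENNReal.ofReal_one]
    exact ENNReal.ofReal_le_ofReal (Real.rpow_le_one (by linarith) (by linarith) hp)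
  -- the splitting sequences
  set m : ℕ → ℕ := fun N => ⌊α * N⌋₊ with hm
  have hmle : ∀ N, m N ≤ N := by
    intro N
    calc ⌊α * N⌋₊ ≤ ⌊(N : ℝ)⌋₊ :=
          Nat.floor_le_floor (by nlinarith [Nat.cast_nonneg (α := ℝ) N])
      _ = N := Nat.floor_natCast N
  set n : ℕ → ℕ := fun N => N - m N with hn
  have hmn : ∀ N, m N + n N = N := fun N => Nat.add_sub_cancel' (hmle N)
  have hm_div : Filter.Tendsto (fun N => (m N : ℝ) / N) atTop (nhds α) :=
    (tendsto_nat_floor_mul_div_atTop hα0.le).comp tendsto_natCast_atTop_atTop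
  have hm_top : Filter.Tendsto m atTop atTop :=
    tendsto_nat_floor_atTop.comp (tendsto_natCast_atTop_atTop.const_mul_atTop hα0)
  have hn_div : Filter.Tendsto (fun N => (n N : ℝ) / N) atTop (nhds (1 - α)) := by
    have h1 : Filter.Tendsto (fun N : ℕ => 1 - (m N : ℝ) / N) atTop (nhds (1 - α)) :=
      tendsto_const_nhds.sub hm_div
    refine h1.congr' ?_
    filter_upwards [Filter.eventually_ge_atTop 1] with N hN1
    have hNpos : (0 : ℝ) < N := by positivity
    rw [hn]
    push_cast [Nat.cast_sub (hmle N)]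
    field_simp
  have hn_top : Filter.Tendsto n atTop atTop := by
    rw [← tendsto_natCast_atTop_iff (R := ℝ)]
    have h1 : Filter.Tendsto (fun N : ℕ => ((n N : ℝ) / N) * N) atTop atTop :=
      (hn_div.pos_mul_atTop (by linarith) tendsto_natCast_atTop_atTop)
    refine h1.congr' ?_
    filter_upwards [Filter.eventually_ge_atTop 1] with N hN1
    have hNpos : (0 : ℝ) ≠ (N : ℝ) := by positivity
    field_simp
  -- the constant for the cross term
  set C := ENNReal.ofReal δ ^ (-s) with hC
  have hCne : C ≠ ⊤ := by
    rw [hC, ENNReal.rpow_neg]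
    simp only [ne_eq, ENNReal.inv_eq_top]
    intro h
    rw [ENNReal.rpow_eq_zero_iff] at h
    rcases h with ⟨h0, -⟩ | ⟨htop, -⟩
    · exact absurd h0 (by simp [ENNReal.ofReal_eq_zero]; linarith)
    · exact absurd htop (by simp)
  refine ENNReal.le_of_forall_pos_le_add fun ε hε _ => ?_
  set ε₁ : ℝ≥0∞ := (ε : ℝ≥0∞) / 2 with hε₁
  have hε₁0 : ε₁ ≠ 0 := by simp [hε₁, ENNReal.div_eq_zero_iff, hε.ne']
  have hε₁top : ε₁ ≠ ⊤ := (ENNReal.div_lt_top ENNReal.coe_ne_top two_ne_zero).ne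
  -- eventual bounds coming from the limsups
  have heA : ∀ᶠ M in atTop, minRieszEnergy s A M ≤ (gA + ε₁) * ENNReal.ofReal (tauNorm s d M) := by
    have h1 : gA < gA + ε₁ := ENNReal.lt_add_right hgA hε₁0
    filter_upwards [Filter.eventually_lt_of_limsup_lt h1, Filter.eventually_ge_atTop 2]
      with M hM hM2
    have hτ := tauNorm_pos hd hs hM2
    have hM' := hM.le
    rw [ENNReal.div_le_iff (by simp [ENNReal.ofReal_eq_zero]; linarith) ENNReal.ofReal_ne_top]
      at hM'
    exact hM'
  have heB : ∀ᶠ M in atTop, minRieszEnergy s B M ≤ (gB + ε₁) * ENNReal.ofReal (tauNorm s d M) := by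
    have h1 : gB < gB + ε₁ := ENNReal.lt_add_right hgB hε₁0
    filter_upwards [Filter.eventually_lt_of_limsup_lt h1, Filter.eventually_ge_atTop 2]
      with M hM hM2
    have hτ := tauNorm_pos hd hs hM2
    have hM' := hM.le
    rw [ENNReal.div_le_iff (by simp [ENNReal.ofReal_eq_zero]; linarith) ENNReal.ofReal_ne_top]
      at hM'
    exact hM'
  -- the dominating sequence
  set v : ℕ → ℝ≥0∞ := fun N =>
    (gA + ε₁) * (ENNReal.ofReal (tauNorm s d (m N)) / ENNReal.ofReal (tauNorm s d N)) +
    (gB + ε₁) * (ENNReal.ofReal (tauNorm s d (n N)) / ENNReal.ofReal (tauNorm s d N)) +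
    ENNReal.ofReal ((N : ℝ) ^ 2 / tauNorm s d N) * C with hv
  have hveq : ∀ᶠ N in atTop,
      minRieszEnergy s (A ∪ B) N / ENNReal.ofReal (tauNorm s d N) ≤ v N := by
    filter_upwards [hm_top.eventually heA, hn_top.eventually heB, Filter.eventually_ge_atTop 2]
      with N hA' hB' hN2
    have hτN := tauNorm_pos hd hs hN2
    have hτNne : ENNReal.ofReal (tauNorm s d N) ≠ 0 := by
      simp [ENNReal.ofReal_eq_zero]; linarith
    have hsplit := minRieszEnergy_union_le hs0.le hδ hsep (m N) (n N)
    rw [hmn N] at hsplit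
    have hcross : ((m N * n N : ℕ) + (m N * n N : ℕ) : ℝ≥0∞) * C
        ≤ ENNReal.ofReal ((N : ℝ) ^ 2) * C := by
      refine mul_le_mul_left ?_ C
      have hnat : m N * n N + m N * n N ≤ N ^ 2 := by
        have := hmn N
        nlinarith [hmn N]
      calc ((m N * n N : ℕ) + (m N * n N : ℕ) : ℝ≥0∞) = ((m N * n N + m N * n N : ℕ) : ℝ≥0∞) := by
            push_cast; ring
        _ ≤ ((N ^ 2 : ℕ) : ℝ≥0∞) := by exact_mod_cast hnat
        _ = ENNReal.ofReal ((N : ℝ) ^ 2) := by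
            rw [← ENNReal.ofReal_natCast]; push_cast; ring_nf
    calc minRieszEnergy s (A ∪ B) N / ENNReal.ofReal (tauNorm s d N)
        ≤ (minRieszEnergy s A (m N) + minRieszEnergy s B (n N)
            + ((m N * n N : ℕ) + (m N * n N : ℕ) : ℝ≥0∞) * C) / ENNReal.ofReal (tauNorm s d N) :=
          ENNReal.div_le_div_right hsplit _
      _ ≤ ((gA + ε₁) * ENNReal.ofReal (tauNorm s d (m N))
            + (gB + ε₁) * ENNReal.ofReal (tauNorm s d (n N))
            + ENNReal.ofReal ((N : ℝ) ^ 2) * C) / ENNReal.ofReal (tauNorm s d N) :=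
          ENNReal.div_le_div_right (add_le_add (add_le_add hA' hB') hcross) _
      _ = v N := by
          rw [hv]
          simp only [ENNReal.add_div]
          congr 1
          · congr 1
            · rw [mul_div_assoc]
            · rw [mul_div_assoc]
          · rw [ENNReal.ofReal_div_of_pos hτN, div_eq_mul_inv, div_eq_mul_inv]
            ring
  -- limit of the dominating sequence
  have hvlim : Filter.Tendsto v atTop (nhds ((gA + ε₁) * cα + (gB + ε₁) * cβ)) := by
    have t1 : Filter.Tendsto
        (fun N => (gA + ε₁) *
          (ENNReal.ofReal (tauNorm s d (m N)) / ENNReal.ofReal (tauNorm s d N))) atTop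
        (nhds ((gA + ε₁) * cα)) :=
      ENNReal.Tendsto.const_mul (tendsto_tau_ratio_ennreal hd hs hα0 hm_div hm_top)
        (Or.inr (by simp [ENNReal.add_ne_top, hgA, hε₁top]))
    have t2 : Filter.Tendsto
        (fun N => (gB + ε₁) *
          (ENNReal.ofReal (tauNorm s d (n N)) / ENNReal.ofReal (tauNorm s d N))) atTop
        (nhds ((gB + ε₁) * cβ)) :=
      ENNReal.Tendsto.const_mul (tendsto_tau_ratio_ennreal hd hs (by linarith) hn_div hn_top)
        (Or.inr (by simp [ENNReal.add_ne_top, hgB, hε₁top]))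
    have t3 : Filter.Tendsto (fun N : ℕ => ENNReal.ofReal ((N : ℝ) ^ 2 / tauNorm s d N) * C)
        atTop (nhds 0) := by
      have := ENNReal.Tendsto.mul_const
        (ENNReal.tendsto_ofReal (tendsto_sq_div_tau hd hs)) (b := C) (Or.inr hCne)
      simpa using this
    have := (t1.add t2).add t3
    rw [add_zero] at this
    exact this
  have hlimsuple : (atTop.limsup fun N : ℕ =>
      minRieszEnergy s (A ∪ B) N / ENNReal.ofReal (tauNorm s d N))
      ≤ (gA + ε₁) * cα + (gB + ε₁) * cβ := by
    calc (atTop.limsup fun N : ℕ =>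
        minRieszEnergy s (A ∪ B) N / ENNReal.ofReal (tauNorm s d N))
        ≤ atTop.limsup v := Filter.limsup_le_limsup hveq
      _ = (gA + ε₁) * cα + (gB + ε₁) * cβ := hvlim.limsup_eq
  calc (atTop.limsup fun N : ℕ =>
      minRieszEnergy s (A ∪ B) N / ENNReal.ofReal (tauNorm s d N))
      ≤ (gA + ε₁) * cα + (gB + ε₁) * cβ := hlimsuple
    _ = gA * cα + gB * cβ + (ε₁ * cα + ε₁ * cβ) := by ring
    _ ≤ gA * cα + gB * cβ + (ε₁ + ε₁) := by
        refine add_le_add_right (add_le_add ?_ ?_) _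
        · calc ε₁ * cα ≤ ε₁ * 1 := mul_le_mul_right hcα1 _
            _ = ε₁ := mul_one _
        · calc ε₁ * cβ ≤ ε₁ * 1 := mul_le_mul_right hcβ1 _
            _ = ε₁ := mul_one _
    _ = gA * cα + gB * cβ + (ε : ℝ≥0∞) := by
        rw [hε₁, ENNReal.add_halves]

lemma real_weight_identity {aR bR s dR : ℝ} (haR : 0 < aR) (hbR : 0 < bR)
    (hd0 : 0 < dR) (hs : dR ≤ s) :
    aR * (aR ^ (-(dR / s)) / (aR ^ (-(dR / s)) + bR ^ (-(dR / s)))) ^ (1 + s / dR)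
      + bR * (bR ^ (-(dR / s)) / (aR ^ (-(dR / s)) + bR ^ (-(dR / s)))) ^ (1 + s / dR)
      = (aR ^ (-(dR / s)) + bR ^ (-(dR / s))) ^ (-(s / dR)) := by
  have hs0 : 0 < s := lt_of_lt_of_le hd0 hs
  set q := dR / s with hq
  set p := 1 + s / dR with hp
  have hS : 0 < aR ^ (-q) + bR ^ (-q) := by positivity
  set S := aR ^ (-q) + bR ^ (-q) with hSdef
  have hqp : 1 + -q * p = -q := by
    have hqp' : q * p = q + 1 := by
      rw [hq, hp]; field_simp
    linarith [hqp']
  have hterm : ∀ x : ℝ, 0 < x → x * (x ^ (-q) / S) ^ p = x ^ (-q) * S ^ (-p) := by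
    intro x hx
    calc x * (x ^ (-q) / S) ^ p = x * (x ^ (-q * p) * S ^ (-p)) := by
          rw [Real.div_rpow (by positivity) hS.le, ← Real.rpow_mul hx.le, div_eq_mul_inv,
            ← Real.rpow_neg hS.le]
      _ = x ^ (1 : ℝ) * x ^ (-q * p) * S ^ (-p) := by rw [Real.rpow_one]; ring
      _ = x ^ (1 + -q * p) * S ^ (-p) := by rw [← Real.rpow_add hx]
      _ = x ^ (-q) * S ^ (-p) := by rw [hqp]
  rw [hterm aR haR, hterm bR hbR]
  have h1 : -(s / dR) = 1 + -p := by rw [hp]; ring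
  rw [h1, Real.rpow_add hS, Real.rpow_one]
  ring

/-- upper bound for the lim sup of the normalized minimal energy of a union of
two bounded sets at positive distance, with `ENNReal` rpow conventions at `0` and `∞`. -/
theorem limsup_union_le (d d' : ℕ) (hd : 1 ≤ d) (hdd : d ≤ d') (s : ℝ) (hs : (d : ℝ) ≤ s)
    (A B : Set (EuclideanSpace ℝ (Fin d')))
    (hA : Bornology.IsBounded A) (hB : Bornology.IsBounded B)
    (hdist : ∃ δ : ℝ, 0 < δ ∧ ∀ a ∈ A, ∀ b ∈ B, δ ≤ dist a b) :
    (atTop.limsup fun N : ℕ =>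
        minRieszEnergy s (A ∪ B) N / ENNReal.ofReal (tauNorm s d N)) ≤
      ((atTop.limsup fun N : ℕ =>
          minRieszEnergy s A N / ENNReal.ofReal (tauNorm s d N)) ^ (-(d : ℝ) / s) +
        (atTop.limsup fun N : ℕ =>
          minRieszEnergy s B N / ENNReal.ofReal (tauNorm s d N)) ^ (-(d : ℝ) / s))
          ^ (-(s / (d : ℝ))) := by
  obtain ⟨δ, hδ, hsep⟩ := hdist
  have hd0 : (0 : ℝ) < d := by exact_mod_cast hd
  have hs0 : (0 : ℝ) < s := lt_of_lt_of_le hd0 hs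
  set gA := atTop.limsup fun N : ℕ =>
    minRieszEnergy s A N / ENNReal.ofReal (tauNorm s d N) with hgAdef
  set gB := atTop.limsup fun N : ℕ =>
    minRieszEnergy s B N / ENNReal.ofReal (tauNorm s d N) with hgBdef
  set gU := atTop.limsup fun N : ℕ =>
    minRieszEnergy s (A ∪ B) N / ENNReal.ofReal (tauNorm s d N) with hgUdef
  have hUA : gU ≤ gA := by
    refine Filter.limsup_le_limsup (Filter.Eventually.of_forall fun N => ?_)
    exact ENNReal.div_le_div_right (minRieszEnergy_anti s Set.subset_union_left N) _
  have hUB : gU ≤ gB := by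
    refine Filter.limsup_le_limsup (Filter.Eventually.of_forall fun N => ?_)
    exact ENNReal.div_le_div_right (minRieszEnergy_anti s Set.subset_union_right N) _
  have hqneg : -(d : ℝ) / s < 0 := by
    rw [neg_div]
    simp only [neg_neg, Left.neg_neg_iff]
    positivity
  have hq'neg : -(s / (d : ℝ)) < 0 := by
    simp only [Left.neg_neg_iff]
    positivity
  have hmulone : -(d : ℝ) / s * -(s / (d : ℝ)) = 1 := by
    field_simp
  rcases eq_or_ne gA 0 with h | hA0
  · exact le_trans (hUA.trans_eq h) zero_le
  rcases eq_or_ne gB 0 with h | hB0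
  · exact le_trans (hUB.trans_eq h) zero_le
  rcases eq_or_ne gA ⊤ with h | hAtop
  · rw [h, ENNReal.top_rpow_of_neg hqneg, zero_add]
    rcases eq_or_ne gB ⊤ with h2 | h2
    · rw [h2, ENNReal.top_rpow_of_neg hqneg, ENNReal.zero_rpow_of_neg hq'neg]
      exact le_top
    · rw [← ENNReal.rpow_mul, hmulone, ENNReal.rpow_one]
      exact hUB
  rcases eq_or_ne gB ⊤ with h | hBtop
  · rw [h, ENNReal.top_rpow_of_neg hqneg, add_zero, ← ENNReal.rpow_mul, hmulone,
      ENNReal.rpow_one]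
    exact hUA
  -- main case: both limsups are finite and positive
  set aR := gA.toReal with haRdef
  set bR := gB.toReal with hbRdef
  have haR : 0 < aR := ENNReal.toReal_pos hA0 hAtop
  have hbR : 0 < bR := ENNReal.toReal_pos hB0 hBtop
  set q := (d : ℝ) / s with hqdef
  set p := 1 + s / (d : ℝ) with hpdef
  have hS : 0 < aR ^ (-q) + bR ^ (-q) := by positivity
  set S := aR ^ (-q) + bR ^ (-q) with hSdef
  set α := aR ^ (-q) / S with hαdef
  have hα0 : 0 < α := by positivity
  have hα1 : α < 1 := by
    rw [hαdef, div_lt_one hS, hSdef]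
    have := Real.rpow_pos_of_pos hbR (-q)
    linarith
  have h1α : 1 - α = bR ^ (-q) / S := by
    rw [hαdef, hSdef]
    field_simp
    ring
  have hkey := key_alpha hd hs hδ hsep hAtop hBtop hα0 hα1
  rw [← hgAdef, ← hgBdef, ← hgUdef, ← hpdef] at hkey
  refine hkey.trans_eq ?_
  have hgAeq : gA = ENNReal.ofReal aR := (ENNReal.ofReal_toReal hAtop).symm
  have hgBeq : gB = ENNReal.ofReal bR := (ENNReal.ofReal_toReal hBtop).symm
  have hneg : -(d : ℝ) / s = -q := by rw [hqdef, neg_div]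
  have h1αpos : (0 : ℝ) < 1 - α := by linarith
  calc gA * ENNReal.ofReal (α ^ p) + gB * ENNReal.ofReal ((1 - α) ^ p)
      = ENNReal.ofReal (aR * α ^ p + bR * (1 - α) ^ p) := by
        rw [hgAeq, hgBeq,
          ENNReal.ofReal_add (by positivity)
            (mul_nonneg hbR.le (Real.rpow_nonneg h1αpos.le p)),
          ENNReal.ofReal_mul haR.le, ENNReal.ofReal_mul hbR.le]
    _ = ENNReal.ofReal (S ^ (-(s / (d : ℝ)))) := by
        rw [h1α, hαdef, hSdef, hpdef]
        rw [real_weight_identity haR hbR hd0 hs]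
    _ = (gA ^ (-(d : ℝ) / s) + gB ^ (-(d : ℝ) / s)) ^ (-(s / (d : ℝ))) := by
        rw [hneg, hgAeq, hgBeq, ENNReal.ofReal_rpow_of_pos haR,
          ENNReal.ofReal_rpow_of_pos hbR,
          ← ENNReal.ofReal_add (by positivity) (by positivity), ← hSdef,
          ENNReal.ofReal_rpow_of_pos hS]
end

section
/- Fix an integer d ≥ 1 and a real s > d, and let U^d = [0,1]^d be the unit cube in ℝ^d. Then the limit g_{s,d}(U^d) := lim_{N→∞} ℰ_s(U^d,N)/N^{1+s/d} exists and is a finite positive real number. -/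
open scoped ENNReal NNReal BigOperators Classical
open MeasureTheory Filter Metric Set Topology

/-- The unit cube `[0,1]^d` in `ℝ^d`. -/
def unitCube (d : ℕ) : Set (EuclideanSpace ℝ (Fin d)) := {x | ∀ i, x i ∈ Set.Icc (0 : ℝ) 1}



lemma rieszEnergy_mono {E : Type*} [PseudoEMetricSpace E] (s : ℝ) {ω₁ ω₂ : Finset E}
    (h : ω₁ ⊆ ω₂) : rieszEnergy s ω₁ ≤ rieszEnergy s ω₂ := by
  refine le_trans (Finset.sum_le_sum fun x _ =>
    Finset.sum_le_sum_of_subset_of_nonneg h (fun _ _ _ => zero_le)) ?_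
  exact Finset.sum_le_sum_of_subset_of_nonneg h (fun _ _ _ => zero_le)

lemma minRieszEnergy_le {E : Type*} [PseudoEMetricSpace E] (s : ℝ) {A : Set E} {ω : Finset E}
    (h : ↑ω ⊆ A) {N : ℕ} (hc : ω.card = N) : minRieszEnergy s A N ≤ rieszEnergy s ω := by
  exact iInf_le_of_le ω (iInf_le_of_le h (iInf_le_of_le hc le_rfl))

lemma minRieszEnergy_mono {E : Type*} [PseudoEMetricSpace E] (s : ℝ) (A : Set E) :
    Monotone (minRieszEnergy s A) := by
  intro N M hNM
  simp only [minRieszEnergy, le_iInf_iff]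
  intro ω hω hcard
  obtain ⟨ω', hsub, hcard'⟩ := Finset.exists_subset_card_eq (hcard ▸ hNM)
  exact (minRieszEnergy_le s (fun x hx => hω (hsub hx)) hcard').trans (rieszEnergy_mono s hsub)

lemma lt_minRiesz_iff {E : Type*} [PseudoEMetricSpace E] (s : ℝ) (A : Set E) (N : ℕ)
    {t : ℝ≥0∞} (h : minRieszEnergy s A N < t) :
    ∃ ω : Finset E, ↑ω ⊆ A ∧ ω.card = N ∧ rieszEnergy s ω < t := by
  have := h
  rw [minRieszEnergy] at this
  simp only [iInf_lt_iff] at this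
  obtain ⟨ω, h1, h2, h3⟩ := this
  exact ⟨ω, h1, h2, h3⟩

lemma rpow_neg_antitone {s : ℝ} (hs : 0 ≤ s) {a b : ℝ≥0∞} (hab : a ≤ b) :
    b ^ (-s) ≤ a ^ (-s) := by
  rw [ENNReal.rpow_neg, ENNReal.rpow_neg]
  exact ENNReal.inv_le_inv.2 (ENNReal.rpow_le_rpow hab hs)

lemma term_upper {X : Type*} [MetricSpace X] {s : ℝ} (hs : 0 ≤ s) {x y : X} {r : ℝ}
    (hr : 0 < r) (h : r ≤ dist x y) :
    edist x y ^ (-s) ≤ ENNReal.ofReal (r ^ (-s)) := by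
  rw [← ENNReal.ofReal_rpow_of_pos hr]
  exact rpow_neg_antitone hs (by rw [edist_dist]; exact ENNReal.ofReal_le_ofReal h)

lemma term_lower {X : Type*} [MetricSpace X] {s : ℝ} (hs : 0 ≤ s) {x y : X} {r : ℝ}
    (hr : 0 < r) (h : dist x y ≤ r) :
    ENNReal.ofReal (r ^ (-s)) ≤ edist x y ^ (-s) := by
  rw [← ENNReal.ofReal_rpow_of_pos hr]
  exact rpow_neg_antitone hs (by rw [edist_dist]; exact ENNReal.ofReal_le_ofReal h)

lemma rieszEnergy_image {X Y : Type*} [MetricSpace X] [MetricSpace Y] (s : ℝ) {c : ℝ}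
    (hc : 0 < c) {T : X → Y} (hT : ∀ x y, dist (T x) (T y) = c * dist x y) (ω : Finset X) :
    rieszEnergy s (ω.image T) = ENNReal.ofReal (c ^ (-s)) * rieszEnergy s ω := by
  have hinj : Function.Injective T := by
    intro x y hxy
    have h := hT x y
    rw [hxy, dist_self] at h
    exact eq_of_dist_eq_zero (by nlinarith [dist_nonneg (x := x) (y := y)])
  rw [rieszEnergy, rieszEnergy, Finset.sum_image (fun a _ b _ h => hinj h), Finset.mul_sum]
  refine Finset.sum_congr rfl fun x hx => ?_
  rw [Finset.sum_image (fun a _ b _ h => hinj h), Finset.mul_sum]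
  refine Finset.sum_congr rfl fun y hy => ?_
  by_cases hxy : x = y
  · simp [hxy]
  · rw [if_neg (fun h => hxy (hinj h)), if_neg hxy]
    have he : edist (T x) (T y) = ENNReal.ofReal c * edist x y := by
      rw [edist_dist, hT, ENNReal.ofReal_mul hc.le, edist_dist]
    rw [he, ENNReal.mul_rpow_of_ne_zero (by simp [hc, ENNReal.ofReal_pos]) 
      (by simpa [edist_pos] using hxy), ENNReal.ofReal_rpow_of_pos hc]

noncomputable def Kc (d : ℕ) (s : ℝ) : ℝ :=
  (2 * d * 3 ^ (d - 1) : ℝ) * (∑' k : ℕ, (k : ℝ) ^ ((d : ℝ) - 1 - s))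

def boxF (d m : ℕ) : Finset (Fin d → ℕ) := Fintype.piFinset fun _ => Finset.range m

noncomputable def kdist {d : ℕ} (b b' : Fin d → ℕ) : ℕ :=
  Finset.univ.sup fun i => ((b i : ℤ) - b' i).natAbs

lemma card_boxF (d m : ℕ) : (boxF d m).card = m ^ d := by
  simp [boxF]

lemma summable_shell {d : ℕ} {s : ℝ} (hs : (d : ℝ) < s) :
    Summable (fun k : ℕ => (k : ℝ) ^ ((d : ℝ) - 1 - s)) :=
  Real.summable_nat_rpow.2 (by linarith)

lemma Kc_nonneg (d : ℕ) {s : ℝ} (hs : (d : ℝ) < s) : 0 ≤ Kc d s := by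
  refine mul_nonneg (by positivity) (tsum_nonneg fun k => ?_)
  exact Real.rpow_nonneg (Nat.cast_nonneg k) _

lemma kdist_pos {d : ℕ} {b b' : Fin d → ℕ} (h : b ≠ b') : 1 ≤ kdist b b' := by
  obtain ⟨i, hi⟩ := Function.ne_iff.1 h
  refine le_trans ?_ (Finset.le_sup (Finset.mem_univ i))
  omega

lemma kdist_coord {d : ℕ} (b b' : Fin d → ℕ) (i : Fin d) :
    ((b i : ℤ) - b' i).natAbs ≤ kdist b b' :=
  Finset.le_sup (f := fun j => ((b j : ℤ) - b' j).natAbs) (Finset.mem_univ i)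

lemma kdist_le {d m : ℕ} {b b' : Fin d → ℕ} (hb : b ∈ boxF d m) (hb' : b' ∈ boxF d m) :
    kdist b b' ≤ m := by
  refine Finset.sup_le fun i _ => ?_
  simp only [boxF, Fintype.mem_piFinset, Finset.mem_range] at hb hb'
  have := hb i; have := hb' i
  omega

lemma pow_sub_pow_le {a b : ℝ} (hb : 0 ≤ b) (hab : b ≤ a) (d : ℕ) :
    a ^ d - b ^ d ≤ d * a ^ (d - 1) * (a - b) := by
  have ha : 0 ≤ a := hb.trans hab
  rw [← geom_sum₂_mul]
  have hsum : (∑ i ∈ Finset.range d, a ^ i * b ^ (d - 1 - i)) ≤ d * a ^ (d - 1) := by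
    calc (∑ i ∈ Finset.range d, a ^ i * b ^ (d - 1 - i))
        ≤ ∑ i ∈ Finset.range d, a ^ (d - 1) := by
          refine Finset.sum_le_sum fun i hi => ?_
          have hi' : i < d := Finset.mem_range.1 hi
          calc a ^ i * b ^ (d - 1 - i) ≤ a ^ i * a ^ (d - 1 - i) :=
                mul_le_mul_of_nonneg_left (pow_le_pow_left₀ hb hab _) (pow_nonneg ha _)
            _ = a ^ (d - 1) := by rw [← pow_add]; congr 1; omega
      _ = d * a ^ (d - 1) := by rw [Finset.sum_const, Finset.card_range, nsmul_eq_mul]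
  exact mul_le_mul_of_nonneg_right hsum (by linarith)

lemma fiber_card_le {d : ℕ} (hd : 1 ≤ d) (m : ℕ) (b : Fin d → ℕ) {k : ℕ} (hk : 1 ≤ k) :
    (((boxF d m).erase b).filter (fun b' => kdist b b' = k)).card
      ≤ (2 * k + 1) ^ d - (2 * k - 1) ^ d := by
  classical
  set big : Finset (Fin d → ℤ) := Fintype.piFinset fun _ => Finset.Icc (-(k : ℤ)) k
  set small : Finset (Fin d → ℤ) := Fintype.piFinset fun _ => Finset.Icc (-(k : ℤ) + 1) (k - 1)
  have hss : small ⊆ big := Fintype.piFinset_subset _ _ fun i => by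
    apply Finset.Icc_subset_Icc <;> omega
  have hcb : big.card = (2 * k + 1) ^ d := by
    simp only [big, Fintype.card_piFinset, Int.card_Icc]
    rw [Finset.prod_const, Finset.card_univ, Fintype.card_fin]
    congr 1
    omega
  have hcs : small.card = (2 * k - 1) ^ d := by
    simp only [small, Fintype.card_piFinset, Int.card_Icc]
    rw [Finset.prod_const, Finset.card_univ, Fintype.card_fin]
    congr 1
    omega
  have hinj : Set.InjOn (fun b' : Fin d → ℕ => fun i => (b' i : ℤ) - b i)
      ↑(((boxF d m).erase b).filter (fun b' => kdist b b' = k)) := by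
    intro x _ y _ hxy
    funext i
    have := congrFun hxy i
    simp only at this
    omega
  have hmaps : ∀ b' ∈ ((boxF d m).erase b).filter (fun b' => kdist b b' = k),
      (fun i => (b' i : ℤ) - b i) ∈ big \ small := by
    intro b' hb'
    simp only [Finset.mem_filter] at hb'
    obtain ⟨hb'e, hb'k⟩ := hb'
    rw [Finset.mem_sdiff]
    constructor
    · simp only [big, Fintype.mem_piFinset, Finset.mem_Icc]
      intro i
      have h1 := kdist_coord b b' i
      rw [hb'k] at h1
      omega
    · intro hmem
      simp only [small, Fintype.mem_piFinset, Finset.mem_Icc] at hmem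
      have : kdist b b' ≤ k - 1 := by
        refine Finset.sup_le fun i _ => ?_
        have := hmem i
        omega
      omega
  calc (((boxF d m).erase b).filter (fun b' => kdist b b' = k)).card
      ≤ (big \ small).card := Finset.card_le_card_of_injOn _ hmaps hinj
    _ = big.card - small.card := Finset.card_sdiff_of_subset hss
    _ = (2 * k + 1) ^ d - (2 * k - 1) ^ d := by rw [hcb, hcs]

lemma shell_sum_le {d : ℕ} (hd : 1 ≤ d) {s : ℝ} (hs : (d : ℝ) < s) (m : ℕ) (b : Fin d → ℕ)
    (hb : b ∈ boxF d m) :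
    ∑ b' ∈ (boxF d m).erase b, ((kdist b b' : ℝ)) ^ (-s) ≤ Kc d s := by
  have hs0 : (0 : ℝ) < s := lt_of_le_of_lt (Nat.cast_nonneg d) hs
  have hmaps : ∀ b' ∈ (boxF d m).erase b, kdist b b' ∈ Finset.Icc 1 m := by
    intro b' hb'
    rw [Finset.mem_erase] at hb'
    rw [Finset.mem_Icc]
    exact ⟨kdist_pos (Ne.symm hb'.1), kdist_le hb hb'.2⟩
  rw [← Finset.sum_fiberwise_of_maps_to hmaps]
  have hbound : ∀ k ∈ Finset.Icc 1 m,
      (∑ b' ∈ ((boxF d m).erase b).filter (fun b' => kdist b b' = k),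
        ((kdist b b' : ℝ)) ^ (-s))
      ≤ (2 * d * 3 ^ (d - 1) : ℝ) * (k : ℝ) ^ ((d : ℝ) - 1 - s) := by
    intro k hk
    rw [Finset.mem_Icc] at hk
    have hk1 : 1 ≤ k := hk.1
    have hkR : (0 : ℝ) < k := by exact_mod_cast hk1
    have hk1R : (1 : ℝ) ≤ k := by exact_mod_cast hk1
    have hterm : ∀ b' ∈ ((boxF d m).erase b).filter (fun b' => kdist b b' = k),
        ((kdist b b' : ℝ)) ^ (-s) = (k : ℝ) ^ (-s) := by
      intro b' hb'
      rw [Finset.mem_filter] at hb'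
      rw [hb'.2]
    rw [Finset.sum_congr rfl hterm, Finset.sum_const, nsmul_eq_mul]
    have hcard : ((((boxF d m).erase b).filter (fun b' => kdist b b' = k)).card : ℝ)
        ≤ (2 * d * 3 ^ (d - 1) : ℝ) * (k : ℝ) ^ (d - 1 : ℕ) := by
      have h1 := fiber_card_le hd m b hk1
      have hle : ((2 * k - 1) ^ d : ℕ) ≤ ((2 * k + 1) ^ d : ℕ) :=
        Nat.pow_le_pow_left (by omega) d
      have hcast : (((2 * k + 1) ^ d - (2 * k - 1) ^ d : ℕ) : ℝ)
          = ((2 * k + 1 : ℝ)) ^ d - ((2 * k - 1 : ℝ)) ^ d := by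
        rw [Nat.cast_sub hle]
        push_cast [hk1]
        have : ((2 * k - 1 : ℕ) : ℝ) = 2 * k - 1 := by
          have : 1 ≤ 2 * k := by omega
          push_cast [this]
          ring
        rw [this]
      calc ((((boxF d m).erase b).filter (fun b' => kdist b b' = k)).card : ℝ)
          ≤ (((2 * k + 1) ^ d - (2 * k - 1) ^ d : ℕ) : ℝ) := by exact_mod_cast h1
        _ = ((2 * k + 1 : ℝ)) ^ d - ((2 * k - 1 : ℝ)) ^ d := hcast
        _ ≤ d * (2 * k + 1 : ℝ) ^ (d - 1) * ((2 * k + 1) - (2 * k - 1)) :=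
            pow_sub_pow_le (by linarith) (by linarith) d
        _ = 2 * d * (2 * k + 1 : ℝ) ^ (d - 1) := by ring
        _ ≤ 2 * d * (3 * k : ℝ) ^ (d - 1) := by
            refine mul_le_mul_of_nonneg_left (pow_le_pow_left₀ (by linarith) (by linarith) _)
              (by positivity)
        _ = 2 * d * 3 ^ (d - 1) * (k : ℝ) ^ (d - 1 : ℕ) := by rw [mul_pow]; ring
    calc ((((boxF d m).erase b).filter (fun b' => kdist b b' = k)).card : ℝ) * (k : ℝ) ^ (-s)
        ≤ (2 * d * 3 ^ (d - 1) : ℝ) * (k : ℝ) ^ (d - 1 : ℕ) * (k : ℝ) ^ (-s) := by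
          refine mul_le_mul_of_nonneg_right hcard (Real.rpow_nonneg hkR.le _)
      _ = (2 * d * 3 ^ (d - 1) : ℝ) * (k : ℝ) ^ ((d : ℝ) - 1 - s) := by
          rw [mul_assoc, ← Real.rpow_natCast (k : ℝ) (d - 1), ← Real.rpow_add hkR]
          congr 2
          have : ((d - 1 : ℕ) : ℝ) = (d : ℝ) - 1 := by
            have := Nat.cast_sub hd (R := ℝ); simpa using this
          rw [this]; ring
  calc (∑ k ∈ Finset.Icc 1 m, ∑ b' ∈ ((boxF d m).erase b).filter (fun b' => kdist b b' = k),
        ((kdist b b' : ℝ)) ^ (-s))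
      ≤ ∑ k ∈ Finset.Icc 1 m, (2 * d * 3 ^ (d - 1) : ℝ) * (k : ℝ) ^ ((d : ℝ) - 1 - s) :=
        Finset.sum_le_sum hbound
    _ = (2 * d * 3 ^ (d - 1) : ℝ) * ∑ k ∈ Finset.Icc 1 m, (k : ℝ) ^ ((d : ℝ) - 1 - s) := by
        rw [Finset.mul_sum]
    _ ≤ Kc d s := by
        refine mul_le_mul_of_nonneg_left ?_ (by positivity)
        exact Summable.sum_le_tsum _ (fun k _ => Real.rpow_nonneg (Nat.cast_nonneg k) _)
          (summable_shell hs)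


lemma euclid_coord_le_dist {d : ℕ} (x y : EuclideanSpace ℝ (Fin d)) (i : Fin d) :
    |x i - y i| ≤ dist x y := by
  rw [EuclideanSpace.dist_eq, ← Real.sqrt_sq_eq_abs]
  apply Real.sqrt_le_sqrt
  have h2 : (x i - y i) ^ 2 = dist (x i) (y i) ^ 2 := by rw [Real.dist_eq, sq_abs]
  rw [h2]
  exact Finset.single_le_sum (f := fun j => dist (x j) (y j) ^ 2)
    (fun j _ => sq_nonneg _) (Finset.mem_univ i)

lemma euclid_dist_le {d : ℕ} {x y : EuclideanSpace ℝ (Fin d)} {r : ℝ} (hr : 0 ≤ r)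
    (h : ∀ i, |x i - y i| ≤ r) : dist x y ≤ Real.sqrt d * r := by
  rw [EuclideanSpace.dist_eq]
  have : ∑ i, dist (x i) (y i) ^ 2 ≤ (d : ℝ) * r ^ 2 := by
    calc ∑ i, dist (x i) (y i) ^ 2 ≤ ∑ _i : Fin d, r ^ 2 := by
          refine Finset.sum_le_sum fun i _ => ?_
          rw [Real.dist_eq]
          exact pow_le_pow_left₀ (abs_nonneg _) (h i) 2
      _ = (d : ℝ) * r ^ 2 := by simp [Finset.sum_const, Finset.card_univ]
  calc Real.sqrt (∑ i, dist (x i) (y i) ^ 2) ≤ Real.sqrt ((d : ℝ) * r ^ 2) :=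
        Real.sqrt_le_sqrt this
    _ = Real.sqrt d * r := by
        rw [Real.sqrt_mul (Nat.cast_nonneg d), Real.sqrt_sq hr]

noncomputable def Tmap (d m : ℕ) (δ : ℝ) (b : Fin d → ℕ) (x : EuclideanSpace ℝ (Fin d)) :
    EuclideanSpace ℝ (Fin d) := WithLp.toLp 2 (fun i => ((1 - δ) / m) * x i + ((b i : ℝ) + δ / 2) / m)

lemma dist_scale_add {d : ℕ} (c : ℝ) (v : Fin d → ℝ) (x y : EuclideanSpace ℝ (Fin d)) :
    dist (show EuclideanSpace ℝ (Fin d) from WithLp.toLp 2 (fun i => c * x i + v i))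
         (show EuclideanSpace ℝ (Fin d) from WithLp.toLp 2 (fun i => c * y i + v i)) = |c| * dist x y := by
  rw [EuclideanSpace.dist_eq, EuclideanSpace.dist_eq]
  dsimp only
  have hterm : ∀ i : Fin d, dist (c * x i + v i) (c * y i + v i) ^ 2
      = c ^ 2 * dist (x i) (y i) ^ 2 := by
    intro i
    rw [Real.dist_eq, Real.dist_eq]
    have : c * x i + v i - (c * y i + v i) = c * (x i - y i) := by ring
    rw [this, abs_mul, mul_pow, sq_abs]
  rw [Finset.sum_congr rfl (fun i _ => hterm i), ← Finset.mul_sum,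
    Real.sqrt_mul (sq_nonneg c), Real.sqrt_sq_eq_abs]

lemma Tmap_dist {d m : ℕ} (hm : 1 ≤ m) {δ : ℝ} (hδ1 : δ < 1) (b : Fin d → ℕ)
    (x y : EuclideanSpace ℝ (Fin d)) :
    dist (Tmap d m δ b x) (Tmap d m δ b y) = ((1 - δ) / m) * dist x y := by
  have hc : 0 < (1 - δ) / m := by
    apply div_pos (by linarith)
    exact_mod_cast hm
  rw [show Tmap d m δ b x = WithLp.toLp 2 (fun i => ((1 - δ) / m) * x i + ((b i : ℝ) + δ / 2) / m) from rfl,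
    show Tmap d m δ b y = WithLp.toLp 2 (fun i => ((1 - δ) / m) * y i + ((b i : ℝ) + δ / 2) / m) from rfl,
    dist_scale_add, abs_of_pos hc]

lemma Tmap_mem_cube {d m : ℕ} (hm : 1 ≤ m) {δ : ℝ} (hδ0 : 0 < δ) (hδ1 : δ < 1)
    {b : Fin d → ℕ} (hb : ∀ i, b i < m) {x : EuclideanSpace ℝ (Fin d)}
    (hx : x ∈ unitCube d) : Tmap d m δ b x ∈ unitCube d := by
  intro i
  have hxi := hx i
  simp only [Set.mem_Icc] at hxi ⊢
  have hmR : (1 : ℝ) ≤ m := by exact_mod_cast hm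
  have hbi : (b i : ℝ) ≤ (m : ℝ) - 1 := by
    have : b i + 1 ≤ m := hb i
    have := (Nat.cast_le (α := ℝ)).2 this
    push_cast at this
    linarith
  have hbi0 : (0 : ℝ) ≤ (b i : ℝ) := Nat.cast_nonneg _
  constructor
  · show 0 ≤ ((1 - δ) / m) * x i + ((b i : ℝ) + δ / 2) / m
    have h1 : 0 ≤ (1 - δ) / m * x i :=
      mul_nonneg (div_nonneg (by linarith) (by linarith)) hxi.1
    have h2 : 0 ≤ ((b i : ℝ) + δ / 2) / m := div_nonneg (by linarith) (by linarith)
    linarith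
  · show ((1 - δ) / m) * x i + ((b i : ℝ) + δ / 2) / m ≤ 1
    have hmpos : (0 : ℝ) < m := by linarith
    rw [div_mul_eq_mul_div, ← add_div, div_le_one hmpos]
    nlinarith [hxi.2]

lemma cube_coord_diff {d : ℕ} {x y : EuclideanSpace ℝ (Fin d)} (hx : x ∈ unitCube d)
    (hy : y ∈ unitCube d) (i : Fin d) : |x i - y i| ≤ 1 := by
  have h1 := hx i; have h2 := hy i
  simp only [Set.mem_Icc] at h1 h2
  rw [abs_le]; constructor <;> linarith

lemma cross_dist {d : ℕ} (hd : 1 ≤ d) {m : ℕ} (hm : 1 ≤ m) {δ : ℝ} (hδ0 : 0 < δ) (hδ1 : δ < 1)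
    {b b' : Fin d → ℕ} (hne : b ≠ b') {x y : EuclideanSpace ℝ (Fin d)}
    (hx : x ∈ unitCube d) (hy : y ∈ unitCube d) :
    δ * kdist b b' / m ≤ dist (Tmap d m δ b x) (Tmap d m δ b' y) := by
  have hNe : Nonempty (Fin d) := ⟨⟨0, hd⟩⟩
  obtain ⟨i, -, hi⟩ := Finset.exists_mem_eq_sup Finset.univ Finset.univ_nonempty
      (fun j => ((b j : ℤ) - b' j).natAbs)
  have hmR : (0 : ℝ) < m := by exact_mod_cast hm
  have hk1 : 1 ≤ kdist b b' := kdist_pos hne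
  have hk1R : (1 : ℝ) ≤ (kdist b b' : ℝ) := by exact_mod_cast hk1
  have hcoord : |(b i : ℝ) - b' i| = (kdist b b' : ℝ) := by
    have h1 : kdist b b' = ((b i : ℤ) - b' i).natAbs := hi
    rw [h1]
    rw [Nat.cast_natAbs]
    push_cast
    ring_nf
  have hdistc := euclid_coord_le_dist (Tmap d m δ b x) (Tmap d m δ b' y) i
  have hTx : Tmap d m δ b x i = ((1 - δ) / m) * x i + ((b i : ℝ) + δ / 2) / m := rfl
  have hTy : Tmap d m δ b' y i = ((1 - δ) / m) * y i + ((b' i : ℝ) + δ / 2) / m := rfl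
  have hdiff : Tmap d m δ b x i - Tmap d m δ b' y i
      = ((b i : ℝ) - b' i) / m + ((1 - δ) / m) * (x i - y i) := by
    rw [hTx, hTy]; ring
  set A := ((b i : ℝ) - b' i) / m with hA
  set B := ((1 - δ) / m) * (x i - y i) with hB
  have habs : |A| - |B| ≤ |A + B| := by
    have h := abs_add_le (A + B) (-B)
    rw [abs_neg] at h
    have h2 : A + B + -B = A := by ring
    rw [h2] at h
    linarith
  have hAval : |A| = (kdist b b' : ℝ) / m := by
    rw [hA, abs_div, hcoord, abs_of_pos hmR]
  have hBval : |B| ≤ (1 - δ) / m := by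
    rw [hB, abs_mul, abs_of_pos (div_pos (by linarith) hmR)]
    have := cube_coord_diff hx hy i
    nlinarith [div_pos (show (0:ℝ) < 1 - δ by linarith) hmR]
  have hfinal : δ * (kdist b b' : ℝ) / m ≤ |A + B| := by
    have hnum : δ * (kdist b b' : ℝ) ≤ (kdist b b' : ℝ) - (1 - δ) := by nlinarith
    calc δ * (kdist b b' : ℝ) / m ≤ ((kdist b b' : ℝ) - (1 - δ)) / m := by
          rw [div_le_div_iff₀ hmR hmR]
          nlinarith
      _ = (kdist b b' : ℝ) / m - (1 - δ) / m := by ring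
      _ ≤ |A| - |B| := by rw [hAval]; linarith
      _ ≤ |A + B| := habs
  calc δ * (kdist b b' : ℝ) / m ≤ |A + B| := hfinal
    _ = |Tmap d m δ b x i - Tmap d m δ b' y i| := by rw [hdiff]
    _ ≤ dist (Tmap d m δ b x) (Tmap d m δ b' y) := hdistc
lemma paste_lemma (d : ℕ) (hd : 1 ≤ d) {s : ℝ} (hs : (d : ℝ) < s) {m N : ℕ} (hm : 1 ≤ m)
    {δ : ℝ} (hδ0 : 0 < δ) (hδ1 : δ < 1)
    (ω : (Fin d → ℕ) → Finset (EuclideanSpace ℝ (Fin d)))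
    (hsub : ∀ b, ↑(ω b) ⊆ unitCube d) (hcard : ∀ b, (ω b).card = N) :
    ∃ Ω : Finset (EuclideanSpace ℝ (Fin d)), ↑Ω ⊆ unitCube d ∧ Ω.card = m ^ d * N ∧
      rieszEnergy s Ω ≤
        ENNReal.ofReal (((1 - δ) / m) ^ (-s)) * (∑ b ∈ boxF d m, rieszEnergy s (ω b))
          + ENNReal.ofReal ((N : ℝ) ^ 2 * ((m : ℝ) / δ) ^ s * Kc d s * m ^ d) := by
  classical
  have hs0 : (0 : ℝ) < s := lt_of_le_of_lt (Nat.cast_nonneg d) hs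
  have hmR : (0 : ℝ) < m := by exact_mod_cast hm
  have hc : 0 < (1 - δ) / m := div_pos (by linarith) hmR
  set T : (Fin d → ℕ) → EuclideanSpace ℝ (Fin d) → EuclideanSpace ℝ (Fin d) :=
    Tmap d m δ with hT
  have hTdist : ∀ b x y, dist (T b x) (T b y) = ((1 - δ) / m) * dist x y :=
    fun b x y => Tmap_dist hm hδ1 b x y
  have hTinj : ∀ b, Function.Injective (T b) := by
    intro b u v huv
    have h := hTdist b u v
    rw [huv, dist_self] at h
    rcases mul_eq_zero.1 h.symm with h1 | h1
    · exact absurd h1 hc.ne'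
    · exact eq_of_dist_eq_zero h1
  have hbox : ∀ b ∈ boxF d m, ∀ i, b i < m := by
    intro b hb i
    simp only [boxF, Fintype.mem_piFinset, Finset.mem_range] at hb
    exact hb i
  have hdisj : (↑(boxF d m) : Set (Fin d → ℕ)).PairwiseDisjoint
      (fun b => (ω b).image (T b)) := by
    intro b hb b' hb' hne
    rw [Function.onFun, Finset.disjoint_left]
    intro z hz hz'
    obtain ⟨u, hu, huz⟩ := Finset.mem_image.1 hz
    obtain ⟨v, hv, hvz⟩ := Finset.mem_image.1 hz'
    have hdd := cross_dist hd hm hδ0 hδ1 hne (hsub b hu) (hsub b' hv)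
    rw [← hT] at hdd
    rw [huz, hvz, dist_self] at hdd
    have hk1R : (1 : ℝ) ≤ (kdist b b' : ℝ) := by exact_mod_cast kdist_pos hne
    have hpos : (0 : ℝ) < δ * (kdist b b' : ℝ) / m :=
      div_pos (mul_pos hδ0 (by linarith)) hmR
    linarith
  set Ω := (boxF d m).biUnion (fun b => (ω b).image (T b)) with hΩ
  have hcardim : ∀ b, ((ω b).image (T b)).card = N := by
    intro b
    rw [Finset.card_image_of_injective _ (hTinj b), hcard]
  refine ⟨Ω, ?_, ?_, ?_⟩
  · intro z hz
    rw [Finset.mem_coe, hΩ, Finset.mem_biUnion] at hz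
    obtain ⟨b, hb, hz⟩ := hz
    obtain ⟨u, hu, huz⟩ := Finset.mem_image.1 hz
    rw [← huz]
    exact Tmap_mem_cube hm hδ0 hδ1 (hbox b hb) (hsub b hu)
  · rw [hΩ, Finset.card_biUnion (fun b hb b' hb' h => hdisj hb hb' h)]
    rw [Finset.sum_congr rfl (fun b _ => hcardim b), Finset.sum_const, card_boxF,
      smul_eq_mul]
  · set F : EuclideanSpace ℝ (Fin d) → EuclideanSpace ℝ (Fin d) → ℝ≥0∞ :=
      fun x y => @ite _ (x = y) (Classical.propDecidable _) 0 (edist x y ^ (-s)) with hF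
    have hE : rieszEnergy s Ω = ∑ b ∈ boxF d m, ∑ b' ∈ boxF d m,
        ∑ u ∈ ω b, ∑ v ∈ ω b', F (T b u) (T b' v) := by
      rw [show rieszEnergy s Ω = ∑ x ∈ Ω, ∑ y ∈ Ω, F x y from rfl]
      rw [hΩ, Finset.sum_biUnion hdisj]
      refine Finset.sum_congr rfl fun b hb => ?_
      rw [Finset.sum_image (fun u _ v _ h => hTinj b h)]
      rw [show (∑ u ∈ ω b, ∑ y ∈ (boxF d m).biUnion (fun b => (ω b).image (T b)), F (T b u) y)
          = ∑ u ∈ ω b, ∑ b' ∈ boxF d m, ∑ y ∈ (ω b').image (T b'), F (T b u) y from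
        Finset.sum_congr rfl fun u _ => Finset.sum_biUnion hdisj]
      rw [Finset.sum_comm]
      refine Finset.sum_congr rfl fun b' hb' => ?_
      refine Finset.sum_congr rfl fun u hu => ?_
      rw [Finset.sum_image (fun p _ q _ h => hTinj b' h)]
    have hdiag : ∀ b ∈ boxF d m, (∑ u ∈ ω b, ∑ v ∈ ω b, F (T b u) (T b v))
        = ENNReal.ofReal (((1 - δ) / m) ^ (-s)) * rieszEnergy s (ω b) := by
      intro b _
      have h1 : rieszEnergy s ((ω b).image (T b))
          = ∑ u ∈ ω b, ∑ v ∈ ω b, F (T b u) (T b v) := by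
        rw [rieszEnergy, Finset.sum_image (fun u _ v _ h => hTinj b h)]
        exact Finset.sum_congr rfl fun u _ =>
          Finset.sum_image (fun p _ q _ h => hTinj b h)
      rw [← h1]
      convert rieszEnergy_image s hc (fun x y => hTdist b x y) (ω b)
      rfl
    have hoff : ∀ b ∈ boxF d m, ∀ b' ∈ (boxF d m).erase b,
        (∑ u ∈ ω b, ∑ v ∈ ω b', F (T b u) (T b' v))
          ≤ ENNReal.ofReal ((N : ℝ) ^ 2 * ((m : ℝ) / δ) ^ s * (kdist b b' : ℝ) ^ (-s)) := by
      intro b hb b' hb'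
      rw [Finset.mem_erase] at hb'
      have hne : b ≠ b' := Ne.symm hb'.1
      have hk1R : (1 : ℝ) ≤ (kdist b b' : ℝ) := by exact_mod_cast kdist_pos hne
      have hr : (0 : ℝ) < δ * (kdist b b' : ℝ) / m :=
        div_pos (mul_pos hδ0 (by linarith)) hmR
      have hterm : ∀ u ∈ ω b, ∀ v ∈ ω b',
          F (T b u) (T b' v) ≤ ENNReal.ofReal ((δ * (kdist b b' : ℝ) / m) ^ (-s)) := by
        intro u hu v hv
        have hdd := cross_dist hd hm hδ0 hδ1 hne (hsub b hu) (hsub b' hv)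
        rw [← hT] at hdd
        have hxy : T b u ≠ T b' v := by
          intro h
          rw [h, dist_self] at hdd
          linarith
        rw [hF]
        simp only [if_neg hxy]
        exact term_upper hs0.le hr hdd
      have hre : (δ * (kdist b b' : ℝ) / m) ^ (-s)
          = ((m : ℝ) / δ) ^ s * (kdist b b' : ℝ) ^ (-s) := by
        have h1 : δ * (kdist b b' : ℝ) / m = (δ / m) * (kdist b b' : ℝ) := by ring
        rw [h1, Real.mul_rpow (le_of_lt (div_pos hδ0 hmR)) (by linarith)]
        congr 1
        have h2 : (m : ℝ) / δ = (δ / m)⁻¹ := by rw [inv_div]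
        rw [h2, Real.inv_rpow (le_of_lt (div_pos hδ0 hmR)), ← Real.rpow_neg
          (le_of_lt (div_pos hδ0 hmR))]
      calc (∑ u ∈ ω b, ∑ v ∈ ω b', F (T b u) (T b' v))
          ≤ ∑ _u ∈ ω b, ∑ _v ∈ ω b',
              ENNReal.ofReal ((δ * (kdist b b' : ℝ) / m) ^ (-s)) :=
            Finset.sum_le_sum fun u hu => Finset.sum_le_sum fun v hv => hterm u hu v hv
        _ = (N : ℝ≥0∞) * ((N : ℝ≥0∞) * ENNReal.ofReal ((δ * (kdist b b' : ℝ) / m) ^ (-s))) := by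
            rw [Finset.sum_const, Finset.sum_const, hcard, hcard, nsmul_eq_mul, nsmul_eq_mul]
        _ = ENNReal.ofReal ((N : ℝ) ^ 2 * ((δ * (kdist b b' : ℝ) / m) ^ (-s))) := by
            rw [← ENNReal.ofReal_natCast N, ← ENNReal.ofReal_mul (Nat.cast_nonneg N),
              ← ENNReal.ofReal_mul (Nat.cast_nonneg N)]
            congr 1
            ring
        _ = ENNReal.ofReal ((N : ℝ) ^ 2 * ((m : ℝ) / δ) ^ s * (kdist b b' : ℝ) ^ (-s)) := by
            rw [hre]
            congr 1
            ring
    calc rieszEnergy s Ω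
        = ∑ b ∈ boxF d m, ((∑ u ∈ ω b, ∑ v ∈ ω b, F (T b u) (T b v))
            + ∑ b' ∈ (boxF d m).erase b, ∑ u ∈ ω b, ∑ v ∈ ω b', F (T b u) (T b' v)) := by
          rw [hE]
          refine Finset.sum_congr rfl fun b hb => ?_
          rw [← Finset.add_sum_erase _ _ hb]
      _ = (∑ b ∈ boxF d m, ENNReal.ofReal (((1 - δ) / m) ^ (-s)) * rieszEnergy s (ω b))
            + ∑ b ∈ boxF d m, ∑ b' ∈ (boxF d m).erase b,
                ∑ u ∈ ω b, ∑ v ∈ ω b', F (T b u) (T b' v) := by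
          rw [Finset.sum_add_distrib]
          congr 1
          exact Finset.sum_congr rfl hdiag
      _ ≤ ENNReal.ofReal (((1 - δ) / m) ^ (-s)) * (∑ b ∈ boxF d m, rieszEnergy s (ω b))
            + ENNReal.ofReal ((N : ℝ) ^ 2 * ((m : ℝ) / δ) ^ s * Kc d s * m ^ d) := by
          refine add_le_add (le_of_eq (Finset.mul_sum _ _ _).symm) ?_
          calc (∑ b ∈ boxF d m, ∑ b' ∈ (boxF d m).erase b,
                ∑ u ∈ ω b, ∑ v ∈ ω b', F (T b u) (T b' v))
              ≤ ∑ b ∈ boxF d m, ∑ b' ∈ (boxF d m).erase b,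
                  ENNReal.ofReal ((N : ℝ) ^ 2 * ((m : ℝ) / δ) ^ s * (kdist b b' : ℝ) ^ (-s)) :=
                Finset.sum_le_sum fun b hb => Finset.sum_le_sum fun b' hb' => hoff b hb b' hb'
            _ ≤ ∑ _b ∈ boxF d m, ENNReal.ofReal ((N : ℝ) ^ 2 * ((m : ℝ) / δ) ^ s * Kc d s) := by
                refine Finset.sum_le_sum fun b hb => ?_
                rw [← ENNReal.ofReal_sum_of_nonneg (fun b' _ => by positivity)]
                refine ENNReal.ofReal_le_ofReal ?_
                rw [← Finset.mul_sum]
                refine mul_le_mul_of_nonneg_left ?_ (by positivity)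
                exact shell_sum_le hd hs m b hb
            _ = ENNReal.ofReal ((N : ℝ) ^ 2 * ((m : ℝ) / δ) ^ s * Kc d s * m ^ d) := by
                rw [Finset.sum_const, card_boxF, nsmul_eq_mul]
                rw [← ENNReal.ofReal_natCast (m ^ d), ← ENNReal.ofReal_mul (by positivity)]
                congr 1
                push_cast
                ring
noncomputable def Au (d : ℕ) (s : ℝ) : ℝ := (4 : ℝ) ^ s * 2 ^ d * Kc d s

lemma cube_zero_mem (d : ℕ) : (WithLp.toLp 2 (fun _ => 0) : EuclideanSpace ℝ (Fin d)) ∈ unitCube d := by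
  intro i
  simp [Set.mem_Icc]

lemma rieszEnergy_singleton {E : Type*} [PseudoEMetricSpace E] (s : ℝ) (x : E) :
    rieszEnergy s {x} = 0 := by
  simp [rieszEnergy]

lemma minRiesz_pow (d : ℕ) (hd : 1 ≤ d) {s : ℝ} (hs : (d : ℝ) < s) {m : ℕ} (hm : 1 ≤ m) :
    minRieszEnergy s (unitCube d) (m ^ d)
      ≤ ENNReal.ofReal ((2 * (m : ℝ)) ^ s * Kc d s * (m : ℝ) ^ d) := by
  obtain ⟨Ω, hΩsub, hΩcard, hΩen⟩ := paste_lemma d hd hs (N := 1) hm (δ := 1/2) (by norm_num)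
    (by norm_num) (fun _ => {(WithLp.toLp 2 (fun _ => 0) : EuclideanSpace ℝ (Fin d))})
    (fun b => by simpa using cube_zero_mem d) (fun b => rfl)
  have h1 : minRieszEnergy s (unitCube d) (m ^ d) ≤ rieszEnergy s Ω := by
    refine minRieszEnergy_le s hΩsub ?_
    rw [hΩcard, mul_one]
  simp only [rieszEnergy_singleton, Finset.sum_const_zero, mul_zero, zero_add, Nat.cast_one,
    one_pow, one_mul] at hΩen
  refine h1.trans (hΩen.trans ?_)
  refine ENNReal.ofReal_le_ofReal (le_of_eq ?_)
  have h3 : ((m : ℝ) / (1/2)) = 2 * m := by ring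
  rw [h3]

lemma minRiesz_upper (d : ℕ) (hd : 1 ≤ d) {s : ℝ} (hs : (d : ℝ) < s) (N : ℕ) (hN : 1 ≤ N) :
    minRieszEnergy s (unitCube d) N ≤ ENNReal.ofReal (Au d s * (N : ℝ) ^ (1 + s / d)) := by
  have hs0 : (0 : ℝ) < s := lt_of_le_of_lt (Nat.cast_nonneg d) hs
  have hd0 : (d : ℝ) ≠ 0 := by positivity
  have hNR : (1 : ℝ) ≤ (N : ℝ) := by exact_mod_cast hN
  set x : ℝ := (N : ℝ) ^ ((d : ℝ)⁻¹) with hx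
  have hx1 : 1 ≤ x := Real.one_le_rpow hNR (by positivity)
  set m : ℕ := ⌈x⌉₊ with hmdef
  have hm1 : 1 ≤ m := by
    rw [hmdef]
    exact Nat.one_le_ceil_iff.2 (by linarith)
  have hmx : x ≤ m := Nat.le_ceil x
  have hmx2 : (m : ℝ) ≤ 2 * x := by
    have := Nat.ceil_lt_add_one (by positivity : (0:ℝ) ≤ x)
    rw [← hmdef] at this
    linarith
  have hxd : x ^ d = (N : ℝ) := by
    rw [hx, ← Real.rpow_natCast ((N:ℝ) ^ ((d : ℝ)⁻¹)) d, ← Real.rpow_mul (by positivity),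
      inv_mul_cancel₀ hd0, Real.rpow_one]
  have hNm : N ≤ m ^ d := by
    have h1 : (N : ℝ) ≤ (m : ℝ) ^ d := by
      rw [← hxd]
      exact pow_le_pow_left₀ (by linarith) hmx d
    exact_mod_cast (by push_cast; exact h1 : (N:ℝ) ≤ ((m ^ d : ℕ) : ℝ))
  calc minRieszEnergy s (unitCube d) N
      ≤ minRieszEnergy s (unitCube d) (m ^ d) := minRieszEnergy_mono s _ hNm
    _ ≤ ENNReal.ofReal ((2 * (m : ℝ)) ^ s * Kc d s * (m : ℝ) ^ d) := minRiesz_pow d hd hs hm1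
    _ ≤ ENNReal.ofReal (Au d s * (N : ℝ) ^ (1 + s / d)) := by
        refine ENNReal.ofReal_le_ofReal ?_
        have hKc := Kc_nonneg d hs
        have h1 : (2 * (m : ℝ)) ^ s ≤ (4 : ℝ) ^ s * (N : ℝ) ^ (s / d) := by
          calc (2 * (m : ℝ)) ^ s ≤ (4 * x) ^ s :=
                Real.rpow_le_rpow (by positivity) (by linarith) hs0.le
            _ = (4 : ℝ) ^ s * x ^ s := Real.mul_rpow (by norm_num) (by positivity)
            _ = (4 : ℝ) ^ s * (N : ℝ) ^ (s / d) := by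
                rw [hx, ← Real.rpow_mul (by positivity)]
                congr 2
                rw [inv_mul_eq_div]
        have h2 : (m : ℝ) ^ d ≤ 2 ^ d * (N : ℝ) := by
          calc (m : ℝ) ^ d ≤ (2 * x) ^ d := pow_le_pow_left₀ (by positivity) hmx2 d
            _ = 2 ^ d * x ^ d := mul_pow 2 x d
            _ = 2 ^ d * (N : ℝ) := by rw [hxd]
        calc (2 * (m : ℝ)) ^ s * Kc d s * (m : ℝ) ^ d
            ≤ ((4 : ℝ) ^ s * (N : ℝ) ^ (s / d)) * Kc d s * (2 ^ d * (N : ℝ)) := by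
              refine mul_le_mul ?_ h2 (by positivity) ?_
              · exact mul_le_mul_of_nonneg_right h1 hKc
              · positivity
          _ = Au d s * ((N : ℝ) ^ (s / d) * (N : ℝ)) := by rw [Au]; ring
          _ = Au d s * (N : ℝ) ^ (1 + s / d) := by
              congr 1
              rw [Real.rpow_add (by positivity : (0:ℝ) < (N:ℝ)), Real.rpow_one]
              ring

lemma minRiesz_ne_top (d : ℕ) (hd : 1 ≤ d) {s : ℝ} (hs : (d : ℝ) < s) (N : ℕ) :
    minRieszEnergy s (unitCube d) N ≠ ⊤ := by
  rcases Nat.eq_zero_or_pos N with h | h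
  · subst h
    have h1 : minRieszEnergy s (unitCube d) 0 ≤ rieszEnergy s (∅ : Finset (EuclideanSpace ℝ (Fin d))) :=
      minRieszEnergy_le s (by simp) rfl
    have h0 : rieszEnergy s (∅ : Finset (EuclideanSpace ℝ (Fin d))) = 0 := by simp [rieszEnergy]
    rw [h0] at h1
    exact ne_top_of_le_ne_top (by simp) h1
  · exact ne_top_of_le_ne_top ENNReal.ofReal_ne_top (minRiesz_upper d hd hs N h)
lemma minRiesz_rec (d : ℕ) (hd : 1 ≤ d) {s : ℝ} (hs : (d : ℝ) < s) {m N : ℕ} (hm : 1 ≤ m)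
    (hN : 1 ≤ N) {δ : ℝ} (hδ0 : 0 < δ) (hδ1 : δ < 1) :
    minRieszEnergy s (unitCube d) (m ^ d * N) ≤
      ENNReal.ofReal (((1 - δ) / m) ^ (-s)) * (m ^ d : ℕ) * minRieszEnergy s (unitCube d) N
        + ENNReal.ofReal ((N : ℝ) ^ 2 * ((m : ℝ) / δ) ^ s * Kc d s * m ^ d) := by
  have hfin : minRieszEnergy s (unitCube d) N ≠ ⊤ := minRiesz_ne_top d hd hs N
  set k₀ : ℝ≥0∞ := ENNReal.ofReal (((1 - δ) / m) ^ (-s)) * ((m ^ d : ℕ) : ℝ≥0∞) with hk₀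
  have hk₀top : k₀ ≠ ⊤ := ENNReal.mul_ne_top ENNReal.ofReal_ne_top (ENNReal.natCast_ne_top _)
  apply ENNReal.le_of_forall_pos_le_add
  intro ε hε _
  set η : ℝ≥0∞ := (ε : ℝ≥0∞) / k₀ with hη
  have hη0 : 0 < η := ENNReal.div_pos (by exact_mod_cast hε.ne') hk₀top
  have hlt2 : minRieszEnergy s (unitCube d) N < minRieszEnergy s (unitCube d) N + η :=
    ENNReal.lt_add_right hfin hη0.ne'
  obtain ⟨ω, hωsub, hωcard, hωen⟩ := lt_minRiesz_iff s _ N hlt2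
  obtain ⟨Ω, hΩsub, hΩcard, hΩen⟩ := paste_lemma d hd hs hm hδ0 hδ1 (fun _ => ω)
    (fun _ => hωsub) (fun _ => hωcard)
  have h1 : minRieszEnergy s (unitCube d) (m ^ d * N) ≤ rieszEnergy s Ω :=
    minRieszEnergy_le s hΩsub hΩcard
  refine h1.trans (hΩen.trans ?_)
  rw [Finset.sum_const, card_boxF, nsmul_eq_mul]
  have h2 : ENNReal.ofReal (((1 - δ) / m) ^ (-s)) * (((m ^ d : ℕ) : ℝ≥0∞) * rieszEnergy s ω)
      ≤ k₀ * minRieszEnergy s (unitCube d) N + ε := by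
    calc ENNReal.ofReal (((1 - δ) / m) ^ (-s)) * (((m ^ d : ℕ) : ℝ≥0∞) * rieszEnergy s ω)
        ≤ ENNReal.ofReal (((1 - δ) / m) ^ (-s))
            * (((m ^ d : ℕ) : ℝ≥0∞) * (minRieszEnergy s (unitCube d) N + η)) := by
          gcongr
      _ = k₀ * minRieszEnergy s (unitCube d) N + k₀ * η := by rw [hk₀]; ring
      _ ≤ k₀ * minRieszEnergy s (unitCube d) N + ε := by
          gcongr
          exact ENNReal.mul_div_le
  calc ENNReal.ofReal (((1 - δ) / m) ^ (-s)) * (((m ^ d : ℕ) : ℝ≥0∞) * rieszEnergy s ω)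
        + ENNReal.ofReal ((N : ℝ) ^ 2 * ((m : ℝ) / δ) ^ s * Kc d s * m ^ d)
      ≤ (k₀ * minRieszEnergy s (unitCube d) N + ε)
        + ENNReal.ofReal ((N : ℝ) ^ 2 * ((m : ℝ) / δ) ^ s * Kc d s * m ^ d) := by
        gcongr
    _ = k₀ * minRieszEnergy s (unitCube d) N
        + ENNReal.ofReal ((N : ℝ) ^ 2 * ((m : ℝ) / δ) ^ s * Kc d s * m ^ d) + ε := by ring

noncomputable def eCube (d : ℕ) (s : ℝ) (N : ℕ) : ℝ := (minRieszEnergy s (unitCube d) N).toReal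

lemma eCube_nonneg (d : ℕ) (s : ℝ) (N : ℕ) : 0 ≤ eCube d s N := ENNReal.toReal_nonneg

lemma eCube_mono (d : ℕ) (hd : 1 ≤ d) {s : ℝ} (hs : (d : ℝ) < s) : Monotone (eCube d s) := by
  intro a b hab
  exact ENNReal.toReal_mono (minRiesz_ne_top d hd hs b) (minRieszEnergy_mono s _ hab)

lemma Au_nonneg (d : ℕ) {s : ℝ} (hs : (d : ℝ) < s) : 0 ≤ Au d s := by
  have := Kc_nonneg d hs
  rw [Au]
  positivity

lemma eCube_upper (d : ℕ) (hd : 1 ≤ d) {s : ℝ} (hs : (d : ℝ) < s) (N : ℕ) (hN : 1 ≤ N) :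
    eCube d s N ≤ Au d s * (N : ℝ) ^ (1 + s / d) := by
  refine ENNReal.toReal_le_of_le_ofReal ?_ (minRiesz_upper d hd hs N hN)
  have h1 : (0:ℝ) ≤ (N:ℝ) ^ (1 + s/d) := Real.rpow_nonneg (Nat.cast_nonneg N) _
  exact mul_nonneg (Au_nonneg d hs) h1

lemma eCube_rec (d : ℕ) (hd : 1 ≤ d) {s : ℝ} (hs : (d : ℝ) < s) {m N : ℕ} (hm : 1 ≤ m)
    (hN : 1 ≤ N) {δ : ℝ} (hδ0 : 0 < δ) (hδ1 : δ < 1) :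
    eCube d s (m ^ d * N) ≤ ((1 - δ) / m) ^ (-s) * (m : ℝ) ^ d * eCube d s N
      + (N : ℝ) ^ 2 * ((m : ℝ) / δ) ^ s * Kc d s * (m : ℝ) ^ d := by
  have hfin : minRieszEnergy s (unitCube d) N ≠ ⊤ := minRiesz_ne_top d hd hs N
  have hmR : (0:ℝ) < m := by exact_mod_cast hm
  have hc0 : (0:ℝ) ≤ ((1 - δ) / m) ^ (-s) := Real.rpow_nonneg (div_nonneg (by linarith) hmR.le) _
  have hKc := Kc_nonneg d hs
  have hcr0 : (0:ℝ) ≤ (N : ℝ) ^ 2 * ((m : ℝ) / δ) ^ s * Kc d s * (m : ℝ) ^ d :=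
    mul_nonneg (mul_nonneg (mul_nonneg (sq_nonneg _)
      (Real.rpow_nonneg (div_nonneg hmR.le hδ0.le) _)) hKc) (pow_nonneg hmR.le d)
  have h := minRiesz_rec d hd hs hm hN hδ0 hδ1
  have hRne : ENNReal.ofReal (((1 - δ) / m) ^ (-s)) * ((m ^ d : ℕ) : ℝ≥0∞)
      * minRieszEnergy s (unitCube d) N
      + ENNReal.ofReal ((N : ℝ) ^ 2 * ((m : ℝ) / δ) ^ s * Kc d s * m ^ d) ≠ ⊤ := by
    refine ENNReal.add_ne_top.2 ⟨?_, ENNReal.ofReal_ne_top⟩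
    exact ENNReal.mul_ne_top
      (ENNReal.mul_ne_top ENNReal.ofReal_ne_top (ENNReal.natCast_ne_top _)) hfin
  have h2 := ENNReal.toReal_mono hRne h
  rw [ENNReal.toReal_add (by
      exact ENNReal.mul_ne_top (ENNReal.mul_ne_top ENNReal.ofReal_ne_top
        (ENNReal.natCast_ne_top _)) hfin) ENNReal.ofReal_ne_top,
    ENNReal.toReal_mul, ENNReal.toReal_mul, ENNReal.toReal_ofReal hc0,
    ENNReal.toReal_ofReal hcr0, ENNReal.toReal_natCast] at h2
  rw [eCube, eCube]
  push_cast at h2 ⊢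
  exact h2
lemma energy_lower (d : ℕ) (hd : 1 ≤ d) {s : ℝ} (hs : (d : ℝ) < s) {m N : ℕ} (hm : 1 ≤ m)
    {ω : Finset (EuclideanSpace ℝ (Fin d))} (hsub : ↑ω ⊆ unitCube d) (hcard : ω.card = N) :
    ENNReal.ofReal ((((N : ℝ) ^ 2 / (m : ℝ) ^ d) - N) * ((m : ℝ) / Real.sqrt d) ^ s)
      ≤ rieszEnergy s ω := by
  classical
  have hs0 : (0 : ℝ) < s := lt_of_le_of_lt (Nat.cast_nonneg d) hs
  have hmR : (0 : ℝ) < m := by exact_mod_cast hm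
  have hdR : (0 : ℝ) < Real.sqrt d := Real.sqrt_pos.2 (by exact_mod_cast hd)
  set q : EuclideanSpace ℝ (Fin d) → (Fin d → ℕ) :=
    fun x i => min (⌊(m : ℝ) * x i⌋₊) (m - 1) with hq
  have hmaps : ∀ x ∈ ω, q x ∈ boxF d m := by
    intro x _
    simp only [boxF, Fintype.mem_piFinset, Finset.mem_range, hq]
    intro i
    omega
  -- same fiber implies close
  have hclose : ∀ x ∈ ω, ∀ y ∈ ω, q x = q y → dist x y ≤ Real.sqrt d / m := by
    intro x hx y hy hqxy
    have hbnd : ∀ z ∈ ω, ∀ i, (q z i : ℝ) ≤ (m : ℝ) * z i ∧ (m : ℝ) * z i ≤ (q z i : ℝ) + 1 := by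
      intro z hz i
      have hz01 := hsub hz i
      simp only [Set.mem_Icc] at hz01
      have hz0 : (0 : ℝ) ≤ (m : ℝ) * z i := mul_nonneg hmR.le hz01.1
      constructor
      · have h1 : q z i ≤ ⌊(m : ℝ) * z i⌋₊ := min_le_left _ _
        exact le_trans (by exact_mod_cast h1 : ((q z i : ℝ)) ≤ (⌊(m : ℝ) * z i⌋₊ : ℝ))
          (Nat.floor_le hz0)
      · by_cases hcase : ⌊(m : ℝ) * z i⌋₊ ≤ m - 1
        · have h1 : q z i = ⌊(m : ℝ) * z i⌋₊ := min_eq_left hcase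
          rw [h1]
          exact le_of_lt (Nat.lt_floor_add_one _)
        · have h1 : q z i = m - 1 := min_eq_right (by omega)
          rw [h1]
          have h2 : ((m - 1 : ℕ) : ℝ) + 1 = m := by
            have : 1 ≤ m := hm
            push_cast [this]
            ring
          rw [h2]
          calc (m : ℝ) * z i ≤ (m : ℝ) * 1 := by
                exact mul_le_mul_of_nonneg_left hz01.2 hmR.le
            _ = m := mul_one _
    have hcoord : ∀ i, |x i - y i| ≤ 1 / m := by
      intro i
      have h1 := hbnd x hx i
      have h2 := hbnd y hy i
      have h3 : q x i = q y i := by rw [hqxy]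
      rw [h3] at h1
      have h4 : |(m : ℝ) * x i - (m : ℝ) * y i| ≤ 1 := by
        rw [abs_le]
        constructor <;> linarith [h1.1, h1.2, h2.1, h2.2]
      have h5 : (m : ℝ) * |x i - y i| ≤ 1 := by
        calc (m : ℝ) * |x i - y i| = |(m : ℝ)| * |x i - y i| := by rw [abs_of_pos hmR]
          _ = |(m : ℝ) * x i - (m : ℝ) * y i| := by rw [← abs_mul]; congr 1; ring
          _ ≤ 1 := h4
      rw [le_div_iff₀ hmR]
      linarith
    calc dist x y ≤ Real.sqrt d * (1 / m) := euclid_dist_le (by positivity) hcoord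
      _ = Real.sqrt d / m := by ring
  -- energy lower bound
  set F : EuclideanSpace ℝ (Fin d) → EuclideanSpace ℝ (Fin d) → ℝ≥0∞ :=
    fun x y => @ite _ (x = y) (Classical.propDecidable _) 0 (edist x y ^ (-s)) with hF
  set C : ℝ≥0∞ := ENNReal.ofReal ((Real.sqrt d / m) ^ (-s)) with hC
  have hstep1 : rieszEnergy s ω = ∑ b ∈ boxF d m, ∑ x ∈ ω.filter (fun z => q z = b),
      ∑ y ∈ ω, F x y := by
    rw [rieszEnergy, ← Finset.sum_fiberwise_of_maps_to hmaps]
  have hstep2 : ∀ b ∈ boxF d m,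
      ((((ω.filter (fun z => q z = b)).card * ((ω.filter (fun z => q z = b)).card - 1) : ℕ))
        : ℝ≥0∞) * C ≤ ∑ x ∈ ω.filter (fun z => q z = b), ∑ y ∈ ω, F x y := by
    intro b _
    set t := ω.filter (fun z => q z = b) with ht
    have hsub' : t ⊆ ω := Finset.filter_subset _ _
    have hinner : ∀ x ∈ t, (((t.card - 1 : ℕ)) : ℝ≥0∞) * C ≤ ∑ y ∈ ω, F x y := by
      intro x hx
      have h1 : ∑ y ∈ t, F x y ≤ ∑ y ∈ ω, F x y :=
        Finset.sum_le_sum_of_subset_of_nonneg hsub' (fun _ _ _ => zero_le)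
      refine le_trans ?_ h1
      have h2 : ∑ y ∈ t, F x y = ∑ y ∈ t.erase x, F x y := by
        rw [← Finset.add_sum_erase t _ hx]
        have : F x x = 0 := by rw [hF]; simp
        rw [this, zero_add]
      rw [h2]
      have h3 : ∀ y ∈ t.erase x, C ≤ F x y := by
        intro y hy
        rw [Finset.mem_erase] at hy
        have hyx : x ≠ y := Ne.symm hy.1
        have hxt := Finset.mem_filter.1 hx
        have hyt := Finset.mem_filter.1 hy.2
        have hd1 : dist x y ≤ Real.sqrt d / m :=
          hclose x hxt.1 y hyt.1 (by rw [hxt.2, hyt.2])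
        rw [hF]
        simp only [if_neg hyx]
        exact term_lower hs0.le (by positivity) hd1
      calc (((t.card - 1 : ℕ)) : ℝ≥0∞) * C = (t.erase x).card • C := by
            rw [Finset.card_erase_of_mem hx, nsmul_eq_mul]
        _ = ∑ _y ∈ t.erase x, C := (Finset.sum_const C).symm
        _ ≤ ∑ y ∈ t.erase x, F x y := Finset.sum_le_sum h3
    calc ((((t.card * (t.card - 1) : ℕ))) : ℝ≥0∞) * C
        = t.card • ((((t.card - 1 : ℕ)) : ℝ≥0∞) * C) := by
          rw [nsmul_eq_mul]
          push_cast
          ring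
      _ = ∑ _x ∈ t, (((t.card - 1 : ℕ)) : ℝ≥0∞) * C := (Finset.sum_const _).symm
      _ ≤ ∑ x ∈ t, ∑ y ∈ ω, F x y := Finset.sum_le_sum hinner
  -- counting
  set P : ℕ := ∑ b ∈ boxF d m, (ω.filter (fun z => q z = b)).card
      * ((ω.filter (fun z => q z = b)).card - 1) with hP
  have hcount : (N : ℝ) ^ 2 / (m : ℝ) ^ d - N ≤ (P : ℝ) := by
    have hsumcard : ∑ b ∈ boxF d m, (ω.filter (fun z => q z = b)).card = N := by
      rw [← hcard]
      exact (Finset.card_eq_sum_card_fiberwise hmaps).symm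
    have hsq : (N : ℝ) ^ 2 ≤ (m : ℝ) ^ d *
        ∑ b ∈ boxF d m, ((ω.filter (fun z => q z = b)).card : ℝ) ^ 2 := by
      have := sq_sum_le_card_mul_sum_sq
        (s := boxF d m) (f := fun b => ((ω.filter (fun z => q z = b)).card : ℝ))
      rw [card_boxF] at this
      calc (N : ℝ) ^ 2 = (∑ b ∈ boxF d m, ((ω.filter (fun z => q z = b)).card : ℝ)) ^ 2 := by
            rw [← hsumcard]; push_cast; ring
        _ ≤ (m ^ d : ℕ) * ∑ b ∈ boxF d m, ((ω.filter (fun z => q z = b)).card : ℝ) ^ 2 := this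
        _ = (m : ℝ) ^ d * ∑ b ∈ boxF d m, ((ω.filter (fun z => q z = b)).card : ℝ) ^ 2 := by
            push_cast; ring
    have hPr : (P : ℝ) = ∑ b ∈ boxF d m, (((ω.filter (fun z => q z = b)).card : ℝ) ^ 2
        - (ω.filter (fun z => q z = b)).card) := by
      rw [hP]
      push_cast
      refine Finset.sum_congr rfl fun b _ => ?_
      set c := (ω.filter (fun z => q z = b)).card
      rcases Nat.eq_zero_or_pos c with hc | hc
      · simp [hc]
      · have : ((c - 1 : ℕ) : ℝ) = (c : ℝ) - 1 := by
          have : 1 ≤ c := hc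
          push_cast [this]
          ring
        rw [this]
        ring
    rw [hPr, Finset.sum_sub_distrib]
    have h1 : ∑ b ∈ boxF d m, ((ω.filter (fun z => q z = b)).card : ℝ) = N := by
      rw [← hsumcard]; push_cast; ring
    rw [h1]
    have h2 : (N : ℝ) ^ 2 / (m : ℝ) ^ d
        ≤ ∑ b ∈ boxF d m, ((ω.filter (fun z => q z = b)).card : ℝ) ^ 2 := by
      rw [div_le_iff₀ (by positivity)]
      linarith [hsq]
    linarith
  -- assemble
  calc ENNReal.ofReal ((((N : ℝ) ^ 2 / (m : ℝ) ^ d) - N) * ((m : ℝ) / Real.sqrt d) ^ s)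
      ≤ (P : ℝ≥0∞) * C := by
        have hCr : ((m : ℝ) / Real.sqrt d) ^ s = (Real.sqrt d / m) ^ (-s) := by
          have h2 : (m : ℝ) / Real.sqrt d = (Real.sqrt d / m)⁻¹ := by rw [inv_div]
          rw [h2, Real.inv_rpow (by positivity), ← Real.rpow_neg (by positivity)]
        rw [hCr]
        calc ENNReal.ofReal ((((N : ℝ) ^ 2 / (m : ℝ) ^ d) - N) * (Real.sqrt d / m) ^ (-s))
            ≤ ENNReal.ofReal ((P : ℝ) * (Real.sqrt d / m) ^ (-s)) := by
              refine ENNReal.ofReal_le_ofReal ?_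
              exact mul_le_mul_of_nonneg_right hcount (Real.rpow_nonneg (by positivity) _)
          _ = (P : ℝ≥0∞) * C := by
              rw [ENNReal.ofReal_mul (Nat.cast_nonneg P), hC, ENNReal.ofReal_natCast]
    _ = ∑ b ∈ boxF d m, ((((ω.filter (fun z => q z = b)).card
          * ((ω.filter (fun z => q z = b)).card - 1) : ℕ)) : ℝ≥0∞) * C := by
        rw [hP]
        push_cast
        rw [Finset.sum_mul]
    _ ≤ ∑ b ∈ boxF d m, ∑ x ∈ ω.filter (fun z => q z = b), ∑ y ∈ ω, F x y :=
        Finset.sum_le_sum hstep2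
    _ = rieszEnergy s ω := hstep1.symm
lemma eCube_lower (d : ℕ) (hd : 1 ≤ d) {s : ℝ} (hs : (d : ℝ) < s) :
    ∃ c : ℝ, 0 < c ∧ ∀ N : ℕ, 2 ^ (d + 1) ≤ N →
      c * (N : ℝ) ^ (1 + s / d) ≤ eCube d s N := by
  have hs0 : (0 : ℝ) < s := lt_of_le_of_lt (Nat.cast_nonneg d) hs
  have hd0 : (d : ℝ) ≠ 0 := by positivity
  have hdR : (0 : ℝ) < Real.sqrt d := Real.sqrt_pos.2 (by exact_mod_cast hd)
  set γ : ℝ := (2 : ℝ) ^ ((d : ℝ)⁻¹) * 2 * Real.sqrt d with hγ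
  have hγ0 : 0 < γ := by
    have : (0:ℝ) < (2:ℝ) ^ ((d : ℝ)⁻¹) := Real.rpow_pos_of_pos (by norm_num) _
    positivity
  refine ⟨γ ^ (-s), Real.rpow_pos_of_pos hγ0 _, fun N hN => ?_⟩
  have hNR : (2:ℝ) ^ (d+1) ≤ (N : ℝ) := by exact_mod_cast hN
  have hN2 : (2:ℝ) ^ d ≤ (N : ℝ) / 2 := by
    rw [le_div_iff₀ (by norm_num)]
    calc (2:ℝ) ^ d * 2 = 2 ^ (d + 1) := by ring
      _ ≤ N := hNR
  have hN0 : (0:ℝ) < N := lt_of_lt_of_le (by positivity) hNR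
  set x : ℝ := ((N : ℝ) / 2) ^ ((d : ℝ)⁻¹) with hx
  have hx2 : 2 ≤ x := by
    have h1 : ((2:ℝ) ^ d) ^ ((d : ℝ)⁻¹) ≤ x :=
      Real.rpow_le_rpow (by positivity) hN2 (by positivity)
    have h2 : ((2:ℝ) ^ d) ^ ((d : ℝ)⁻¹) = 2 := by
      rw [← Real.rpow_natCast 2 d, ← Real.rpow_mul (by norm_num), mul_inv_cancel₀ hd0,
        Real.rpow_one]
    linarith [h2 ▸ h1]
  set m : ℕ := ⌊x⌋₊ with hmdef
  have hm2 : 2 ≤ m := Nat.le_floor (by exact_mod_cast hx2)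
  have hm1 : 1 ≤ m := by omega
  have hmR : (0:ℝ) < m := by exact_mod_cast hm1
  have hmx : (m : ℝ) ≤ x := Nat.floor_le (by positivity)
  have hxm : x ≤ 2 * m := by
    have h1 := Nat.lt_floor_add_one x
    have h2 : (1:ℝ) ≤ m := by exact_mod_cast hm1
    rw [← hmdef] at h1
    linarith
  have hxd : x ^ d = (N : ℝ) / 2 := by
    rw [hx, ← Real.rpow_natCast (((N:ℝ)/2) ^ ((d : ℝ)⁻¹)) d, ← Real.rpow_mul (by positivity),
      inv_mul_cancel₀ hd0, Real.rpow_one]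
  have hmd : (m : ℝ) ^ d ≤ (N : ℝ) / 2 := by
    rw [← hxd]
    exact pow_le_pow_left₀ hmR.le hmx d
  -- minRiesz lower bound
  have hmin : ENNReal.ofReal ((((N : ℝ) ^ 2 / (m : ℝ) ^ d) - N) * ((m : ℝ) / Real.sqrt d) ^ s)
      ≤ minRieszEnergy s (unitCube d) N := by
    refine le_iInf fun ω => le_iInf fun hsub => le_iInf fun hcard => ?_
    exact energy_lower d hd hs hm1 hsub hcard
  -- real comparison
  have hreal : γ ^ (-s) * (N : ℝ) ^ (1 + s / d)
      ≤ (((N : ℝ) ^ 2 / (m : ℝ) ^ d) - N) * ((m : ℝ) / Real.sqrt d) ^ s := by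
    have h1 : (N : ℝ) ≤ (N : ℝ) ^ 2 / (m : ℝ) ^ d - N := by
      have hmd0 : (0:ℝ) < (m:ℝ) ^ d := by positivity
      have h2 : 2 * (N:ℝ) ≤ (N : ℝ) ^ 2 / (m : ℝ) ^ d := by
        rw [le_div_iff₀ hmd0]
        nlinarith
      linarith
    have h2 : (N : ℝ) ^ ((d:ℝ)⁻¹) / γ ≤ (m : ℝ) / Real.sqrt d := by
      rw [div_le_div_iff₀ hγ0 hdR]
      have h3 : (N : ℝ) ^ ((d:ℝ)⁻¹) = x * 2 ^ ((d:ℝ)⁻¹) := by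
        rw [hx, ← Real.mul_rpow (by positivity) (by norm_num)]
        congr 1
        field_simp
      rw [h3, hγ]
      have h4 : x ≤ 2 * m := hxm
      have h5 : (0:ℝ) < (2:ℝ) ^ ((d : ℝ)⁻¹) := Real.rpow_pos_of_pos (by norm_num) _
      calc x * 2 ^ ((d:ℝ)⁻¹) * Real.sqrt d ≤ (2 * m) * 2 ^ ((d:ℝ)⁻¹) * Real.sqrt d := by
            refine mul_le_mul_of_nonneg_right (mul_le_mul_of_nonneg_right h4 h5.le) hdR.le
        _ = (m:ℝ) * (2 ^ ((d:ℝ)⁻¹) * 2 * Real.sqrt d) := by ring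
    have h2' : ((N : ℝ) ^ ((d:ℝ)⁻¹) / γ) ^ s ≤ ((m : ℝ) / Real.sqrt d) ^ s :=
      Real.rpow_le_rpow (by positivity) h2 hs0.le
    have h3 : ((N : ℝ) ^ ((d:ℝ)⁻¹) / γ) ^ s = (N:ℝ) ^ (s/d) * γ ^ (-s) := by
      rw [Real.div_rpow (by positivity) hγ0.le, ← Real.rpow_mul (by positivity),
        Real.rpow_neg hγ0.le]
      rw [div_eq_mul_inv]
      congr 2
      rw [inv_mul_eq_div]
    calc γ ^ (-s) * (N : ℝ) ^ (1 + s / d)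
        = (N:ℝ) * ((N:ℝ) ^ (s/d) * γ ^ (-s)) := by
          rw [Real.rpow_add hN0, Real.rpow_one]
          ring
      _ = (N:ℝ) * ((N : ℝ) ^ ((d:ℝ)⁻¹) / γ) ^ s := by rw [h3]
      _ ≤ ((N : ℝ) ^ 2 / (m : ℝ) ^ d - N) * ((m : ℝ) / Real.sqrt d) ^ s := by
          refine mul_le_mul h1 h2' (by positivity) ?_
          linarith [h1, hN0]
  calc γ ^ (-s) * (N : ℝ) ^ (1 + s / d)
      ≤ (ENNReal.ofReal ((((N : ℝ) ^ 2 / (m : ℝ) ^ d) - N)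
          * ((m : ℝ) / Real.sqrt d) ^ s)).toReal := by
        rw [ENNReal.toReal_ofReal (le_trans (by positivity) hreal)]
        exact hreal
    _ ≤ eCube d s N := ENNReal.toReal_mono (minRiesz_ne_top d hd hs N) hmin

lemma fekete_limit (d : ℕ) (hd : 1 ≤ d) {s : ℝ} (hs : (d : ℝ) < s) (e : ℕ → ℝ)
    (he0 : ∀ N, 0 ≤ e N) (emono : Monotone e)
    {A : ℝ} (hA : ∀ N : ℕ, 1 ≤ N → e N ≤ A * (N : ℝ) ^ (1 + s / d))
    {c : ℝ} (hc : 0 < c) {N₂ : ℕ} (hlow : ∀ N : ℕ, N₂ ≤ N → c * (N : ℝ) ^ (1 + s / d) ≤ e N)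
    {K : ℝ} (hK : 0 ≤ K)
    (hrec : ∀ m N : ℕ, 1 ≤ m → 1 ≤ N → ∀ δ : ℝ, 0 < δ → δ < 1 →
      e (m ^ d * N) ≤ ((1 - δ) / m) ^ (-s) * (m : ℝ) ^ d * e N
        + (N : ℝ) ^ 2 * ((m : ℝ) / δ) ^ s * K * (m : ℝ) ^ d) :
    ∃ C : ℝ, 0 < C ∧
      Tendsto (fun N : ℕ => e N / (N : ℝ) ^ (1 + s / d)) atTop (𝓝 C) := by
  have hs0 : (0 : ℝ) < s := lt_of_le_of_lt (Nat.cast_nonneg d) hs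
  have hd0 : (d : ℝ) ≠ 0 := by positivity
  have hdpos : (0:ℝ) < d := by positivity
  set p : ℝ := 1 + s / d with hp
  have hp1 : 1 < p := by
    have : 0 < s / d := div_pos hs0 hdpos
    rw [hp]; linarith
  have hp0 : 0 < p := by linarith
  set τ : ℕ → ℝ := fun N => e N / (N : ℝ) ^ p with hτ
  have hτ0 : ∀ N, 0 ≤ τ N := fun N =>
    div_nonneg (he0 N) (Real.rpow_nonneg (Nat.cast_nonneg N) _)
  have hτA : ∀ N : ℕ, 1 ≤ N → τ N ≤ A := by
    intro N hN
    have hNR : (0:ℝ) < N := by exact_mod_cast hN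
    have hNp : (0:ℝ) < (N:ℝ) ^ p := Real.rpow_pos_of_pos hNR _
    rw [hτ]
    rw [div_le_iff₀ hNp]
    exact hA N hN
  have hbdd_above : IsBoundedUnder (· ≤ ·) atTop τ := by
    refine isBoundedUnder_of ⟨max A (τ 0), fun N => ?_⟩
    rcases Nat.eq_zero_or_pos N with h | h
    · rw [h]; exact le_max_right _ _
    · exact le_trans (hτA N h) (le_max_left _ _)
  have hbdd_below : IsBoundedUnder (· ≥ ·) atTop τ := isBoundedUnder_of ⟨0, fun N => hτ0 N⟩
  set L : ℝ := liminf τ atTop with hL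
  have hcL : c ≤ L := by
    refine le_liminf_of_le hbdd_above.isCoboundedUnder_ge ?_
    filter_upwards [eventually_ge_atTop (max N₂ 1)] with N hN
    have hN1 : 1 ≤ N := le_trans (le_max_right _ _) hN
    have hNR : (0:ℝ) < N := by exact_mod_cast hN1
    have hNp : (0:ℝ) < (N:ℝ) ^ p := Real.rpow_pos_of_pos hNR _
    rw [hτ]
    rw [le_div_iff₀ hNp]
    exact hlow N (le_trans (le_max_left _ _) hN)
  have hL0 : 0 < L := lt_of_lt_of_le hc hcL
  -- the key recursion for τ
  have hstar : ∀ (t : ℝ), 0 < t → t < 1 → ∀ (N₀ : ℕ), 1 ≤ N₀ → ∀ (m : ℕ), 1 ≤ m →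
      τ (m ^ d * N₀) ≤ (1 - t) ^ (-s) * τ N₀ + K * t ^ (-s) * (N₀ : ℝ) ^ (1 - s / d) := by
    intro t ht0 ht1 N₀ hN₀ m hm
    have hmR : (0:ℝ) < m := by exact_mod_cast hm
    have hN₀R : (0:ℝ) < N₀ := by exact_mod_cast hN₀
    have hMN : (((m ^ d * N₀ : ℕ)) : ℝ) = (m:ℝ) ^ d * N₀ := by push_cast; ring
    have hD : (((m ^ d * N₀ : ℕ)) : ℝ) ^ p = (m:ℝ) ^ ((d:ℝ) + s) * (N₀:ℝ) ^ p := by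
      rw [hMN, Real.mul_rpow (by positivity) (by positivity), ← Real.rpow_natCast (m:ℝ) d,
        ← Real.rpow_mul hmR.le]
      congr 2
      rw [hp]
      field_simp
    have hDpos : (0:ℝ) < (((m ^ d * N₀ : ℕ)) : ℝ) ^ p := by
      have : (0:ℝ) < (((m ^ d * N₀ : ℕ)) : ℝ) := by
        rw [hMN]; positivity
      exact Real.rpow_pos_of_pos this _
    rw [hτ]
    rw [div_le_iff₀ hDpos]
    refine le_trans (hrec m N₀ hm hN₀ t ht0 ht1) (le_of_eq ?_)
    rw [hD]
    have hmds : (m:ℝ) ^ ((d:ℝ) + s) = (m:ℝ) ^ d * (m:ℝ) ^ s := by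
      rw [Real.rpow_add hmR, Real.rpow_natCast]
    have h1 : ((1 - t)/m) ^ (-s) = (1 - t) ^ (-s) * (m:ℝ) ^ s := by
      rw [Real.div_rpow (by linarith) hmR.le, Real.rpow_neg hmR.le]
      field_simp
    have h2 : ((m:ℝ)/t) ^ s = (m:ℝ) ^ s * t ^ (-s) := by
      rw [Real.div_rpow hmR.le ht0.le, Real.rpow_neg ht0.le, div_eq_mul_inv]
    have hN₀p : ((N₀:ℝ) ^ p) ≠ 0 := ne_of_gt (Real.rpow_pos_of_pos hN₀R _)
    have h5 : e N₀ / (N₀:ℝ) ^ p * (N₀:ℝ) ^ p = e N₀ := div_mul_cancel₀ _ hN₀p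
    have h4 : (N₀:ℝ) ^ (1 - s/d) * (N₀:ℝ) ^ p = (N₀:ℝ) ^ 2 := by
      rw [← Real.rpow_add hN₀R, hp]
      rw [show 1 - s/d + (1 + s/d) = (2:ℝ) by ring]
      rw [show ((2:ℝ)) = ((2:ℕ):ℝ) by norm_num, Real.rpow_natCast]
    rw [h1, h2, hmds]
    linear_combination (-((1 - t) ^ (-s) * (m:ℝ) ^ d * (m:ℝ) ^ s)) * h5
      + (-(K * t ^ (-s) * (m:ℝ) ^ d * (m:ℝ) ^ s)) * h4
  -- main claim
  have hclaim : ∀ t : ℝ, 0 < t → t < 1/2 →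
      limsup τ atTop ≤ ((1 - t) ^ (-s) * (L + t) + t) * (1 + t) ^ p := by
    intro t ht0 ht2
    have ht1 : t < 1 := by linarith
    have hfreq : ∃ᶠ N in atTop, τ N < L + t :=
      frequently_lt_of_liminf_lt hbdd_above.isCoboundedUnder_ge (by rw [← hL]; linarith)
    have hev1 : ∀ᶠ N : ℕ in atTop, K * t ^ (-s) * (N : ℝ) ^ (1 - s/d) ≤ t := by
      have hsd : 0 < s/d - 1 := by
        rw [lt_sub_iff_add_lt, zero_add, lt_div_iff₀ hdpos]
        linarith
      have h1 : Tendsto (fun N : ℕ => (N:ℝ) ^ (1 - s/d)) atTop (𝓝 0) := by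
        have h2 := (tendsto_rpow_neg_atTop hsd).comp tendsto_natCast_atTop_atTop
        have h3 : (fun N : ℕ => ((N:ℝ) ^ (-(s/d - 1)))) = fun N : ℕ => (N:ℝ) ^ (1 - s/d) := by
          funext N
          congr 1
          ring
        exact h3 ▸ h2
      have h4 : Tendsto (fun N : ℕ => K * t ^ (-s) * (N : ℝ) ^ (1 - s/d)) atTop (𝓝 0) := by
        have := h1.const_mul (K * t ^ (-s))
        simpa using this
      exact h4.eventually_le_const ht0
    have hev2 : ∀ᶠ N : ℕ in atTop, max N₂ 1 ≤ N := eventually_ge_atTop _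
    obtain ⟨N₀, hN₀f, hN₀ev, hN₀ge⟩ := (hfreq.and_eventually (hev1.and hev2)).exists
    have hN₀1 : 1 ≤ N₀ := le_trans (le_max_right _ _) hN₀ge
    have hN₀R : (0:ℝ) < N₀ := by exact_mod_cast hN₀1
    set Q : ℝ := (1 - t) ^ (-s) * (L + t) + t with hQ
    have h1ts : (0:ℝ) ≤ (1-t) ^ (-s) := Real.rpow_nonneg (by linarith) _
    have hQ0 : 0 ≤ Q := by
      have hLt : (0:ℝ) ≤ L + t := by linarith
      have := mul_nonneg h1ts hLt
      rw [hQ]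
      linarith
    have hτm : ∀ m : ℕ, 1 ≤ m → τ (m ^ d * N₀) ≤ Q := by
      intro m hm
      refine (hstar t ht0 ht1 N₀ hN₀1 m hm).trans ?_
      rw [hQ]
      exact add_le_add (mul_le_mul_of_nonneg_left hN₀f.le h1ts) hN₀ev
    have hy : Tendsto (fun M : ℕ => ((M:ℝ)/N₀) ^ ((d:ℝ)⁻¹)) atTop atTop := by
      refine (tendsto_rpow_atTop (by positivity)).comp ?_
      exact Tendsto.atTop_div_const hN₀R tendsto_natCast_atTop_atTop
    have hone : Tendsto (fun M : ℕ => (1 + (((M:ℝ)/N₀) ^ ((d:ℝ)⁻¹))⁻¹) ^ d) atTop (𝓝 1) := by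
      have h1 : Tendsto (fun M : ℕ => (((M:ℝ)/N₀) ^ ((d:ℝ)⁻¹))⁻¹) atTop (𝓝 0) :=
        hy.inv_tendsto_atTop
      have h2 := (tendsto_const_nhds (α := ℕ) (x := (1:ℝ)) (f := atTop)).add h1
      have h3 := h2.pow d
      simpa using h3
    have hev4 : ∀ᶠ M : ℕ in atTop, (1 + (((M:ℝ)/N₀) ^ ((d:ℝ)⁻¹))⁻¹) ^ d ≤ 1 + t :=
      hone.eventually_le_const (by linarith)
    have hev3 : ∀ᶠ M : ℕ in atTop, τ M ≤ Q * (1 + t) ^ p := by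
      filter_upwards [hev4, eventually_ge_atTop 1, hy.eventually_ge_atTop 1] with M hM4 hM1 hy1
      have hMR : (0:ℝ) < M := by exact_mod_cast hM1
      set y : ℝ := ((M:ℝ)/N₀) ^ ((d:ℝ)⁻¹) with hydef
      have hy0 : (0:ℝ) < y := lt_of_lt_of_le one_pos hy1
      set m : ℕ := ⌈y⌉₊ with hmdef
      have hm1 : 1 ≤ m := Nat.one_le_ceil_iff.2 hy0
      have hmR : (0:ℝ) < m := by exact_mod_cast hm1
      have hmy : y ≤ m := Nat.le_ceil y
      have hmy2 : (m:ℝ) ≤ y + 1 := le_of_lt (Nat.ceil_lt_add_one hy0.le)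
      have hyd : y ^ d = (M:ℝ)/N₀ := by
        rw [hydef, ← Real.rpow_natCast (((M:ℝ)/N₀) ^ ((d:ℝ)⁻¹)) d,
          ← Real.rpow_mul (by positivity), inv_mul_cancel₀ hd0, Real.rpow_one]
      have hMm : M ≤ m ^ d * N₀ := by
        have h1 : (M:ℝ) ≤ (m:ℝ) ^ d * N₀ := by
          have h2 : y ^ d * N₀ = M := by
            rw [hyd]
            field_simp
          rw [← h2]
          exact mul_le_mul_of_nonneg_right (pow_le_pow_left₀ hy0.le hmy d) hN₀R.le
        exact_mod_cast (by push_cast; exact h1 : (M:ℝ) ≤ ((m ^ d * N₀ : ℕ) : ℝ))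
      have hr : ((m:ℝ) ^ d * N₀) / M ≤ 1 + t := by
        have h1 : (m:ℝ) ^ d ≤ (y+1) ^ d := pow_le_pow_left₀ hmR.le hmy2 d
        have h2 : (y+1) ^ d = y ^ d * (1 + y⁻¹) ^ d := by
          rw [← mul_pow]
          congr 1
          field_simp
        have h3 : ((m:ℝ) ^ d * N₀) / M = (m:ℝ) ^ d / y ^ d := by
          rw [hyd]
          field_simp
        rw [h3, div_le_iff₀ (by positivity : (0:ℝ) < y ^ d)]
        calc (m:ℝ) ^ d ≤ y ^ d * (1 + y⁻¹) ^ d := by rw [← h2]; exact h1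
          _ ≤ y ^ d * (1 + t) := mul_le_mul_of_nonneg_left hM4 (by positivity)
          _ = (1 + t) * y ^ d := by ring
      have hτM : τ M ≤ τ (m ^ d * N₀) * (((m:ℝ) ^ d * N₀ / M)) ^ p := by
        have h1 : e M ≤ e (m ^ d * N₀) := emono hMm
        have hMp : (0:ℝ) < (M:ℝ) ^ p := Real.rpow_pos_of_pos hMR _
        have hDR : (0:ℝ) < (m:ℝ) ^ d * N₀ := by positivity
        have hDp : (0:ℝ) < ((m:ℝ) ^ d * N₀) ^ p := Real.rpow_pos_of_pos hDR _
        have hcast : (((m ^ d * N₀ : ℕ)):ℝ) = (m:ℝ) ^ d * N₀ := by push_cast; ring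
        calc τ M = e M / (M:ℝ) ^ p := rfl
          _ ≤ e (m ^ d * N₀) / (M:ℝ) ^ p := by
              gcongr
          _ = (e (m ^ d * N₀) / ((m:ℝ) ^ d * N₀) ^ p) * (((m:ℝ) ^ d * N₀) ^ p / (M:ℝ) ^ p) := by
              field_simp
          _ = τ (m ^ d * N₀) * (((m:ℝ) ^ d * N₀ / M)) ^ p := by
              congr 1
              · simp only [hτ]
                rw [hcast]
              · rw [Real.div_rpow hDR.le (Nat.cast_nonneg M)]
      calc τ M ≤ τ (m ^ d * N₀) * (((m:ℝ) ^ d * N₀ / M)) ^ p := hτM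
        _ ≤ Q * (1 + t) ^ p := by
            refine mul_le_mul (hτm m hm1) ?_ (Real.rpow_nonneg (by positivity) _) hQ0
            exact Real.rpow_le_rpow (by positivity) hr hp0.le
    exact limsup_le_of_le hbdd_below.isCoboundedUnder_le hev3
  -- pass to the limit in t
  have hlimsup : limsup τ atTop ≤ L := by
    have hg : Tendsto (fun n : ℕ => 1/((n:ℝ)+3)) atTop (𝓝 0) := by
      have h1 : Tendsto (fun n : ℕ => (n:ℝ)+3) atTop atTop :=
        tendsto_atTop_add_const_right _ 3 tendsto_natCast_atTop_atTop
      simpa [one_div, Pi.inv_def] using h1.inv_tendsto_atTop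
    have h1 : Tendsto (fun n : ℕ => 1 - 1/((n:ℝ)+3)) atTop (𝓝 1) := by
      simpa using (tendsto_const_nhds (α := ℕ) (x := (1:ℝ)) (f := atTop)).sub hg
    have h2 : Tendsto (fun n : ℕ => (1 - 1/((n:ℝ)+3)) ^ (-s)) atTop (𝓝 1) := by
      have hcont := (Real.continuousAt_rpow_const 1 (-s) (Or.inl one_ne_zero)).tendsto.comp h1
      simpa [Real.one_rpow, Function.comp_def] using hcont
    have h3 : Tendsto (fun n : ℕ => (1 + 1/((n:ℝ)+3)) ^ p) atTop (𝓝 1) := by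
      have h4 : Tendsto (fun n : ℕ => 1 + 1/((n:ℝ)+3)) atTop (𝓝 1) := by
        simpa using (tendsto_const_nhds (α := ℕ) (x := (1:ℝ)) (f := atTop)).add hg
      have hcont := (Real.continuousAt_rpow_const 1 p (Or.inl one_ne_zero)).tendsto.comp h4
      simpa [Real.one_rpow, Function.comp_def] using hcont
    have hseq : Tendsto (fun n : ℕ =>
        ((1 - 1/((n:ℝ)+3)) ^ (-s) * (L + 1/((n:ℝ)+3)) + 1/((n:ℝ)+3)) * (1 + 1/((n:ℝ)+3)) ^ p)
        atTop (𝓝 L) := by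
      have h5 : Tendsto (fun n : ℕ => L + 1/((n:ℝ)+3)) atTop (𝓝 L) := by
        simpa using (tendsto_const_nhds (α := ℕ) (x := L) (f := atTop)).add hg
      have h6 := ((h2.mul h5).add hg).mul h3
      simpa using h6
    refine ge_of_tendsto hseq (Eventually.of_forall fun n => ?_)
    have h0 : (0:ℝ) < 1/((n:ℝ)+3) := by positivity
    have hhalf : 1/((n:ℝ)+3) < 1/2 := by
      rw [div_lt_div_iff₀ (by positivity) (by norm_num)]
      have : (0:ℝ) ≤ (n:ℝ) := Nat.cast_nonneg n
      linarith
    exact hclaim _ h0 hhalf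
  exact ⟨L, hL0, tendsto_of_le_liminf_of_limsup_le le_rfl hlimsup hbdd_above hbdd_below⟩

/-- for `s > d`, the limit `g_{s,d}(U^d) = lim_N ℰ_s(U^d,N)/N^{1+s/d}` exists
and is a finite positive real number. -/
theorem tendsto_minRieszEnergy_unitCube (d : ℕ) (hd : 1 ≤ d) (s : ℝ) (hs : (d : ℝ) < s) :
    ∃ C : ℝ, 0 < C ∧
      Tendsto
        (fun N : ℕ =>
          minRieszEnergy s (unitCube d) N / ENNReal.ofReal ((N : ℝ) ^ (1 + s / (d : ℝ))))
        atTop (𝓝 (ENNReal.ofReal C)) := by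
  obtain ⟨c, hc, hlow⟩ := eCube_lower d hd hs
  obtain ⟨C, hC0, hC⟩ := fekete_limit d hd hs (eCube d s) (eCube_nonneg d s)
    (eCube_mono d hd hs) (eCube_upper d hd hs) hc hlow (Kc_nonneg d hs)
    (fun m N hm hN δ hδ0 hδ1 => eCube_rec d hd hs hm hN hδ0 hδ1)
  refine ⟨C, hC0, ?_⟩
  have hofReal : Tendsto (fun N : ℕ => ENNReal.ofReal (eCube d s N / (N:ℝ) ^ (1 + s/d)))
      atTop (𝓝 (ENNReal.ofReal C)) := (ENNReal.continuous_ofReal.tendsto C).comp hC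
  refine hofReal.congr' ?_
  filter_upwards [eventually_ge_atTop 1] with N hN
  have hNp : (0:ℝ) < (N:ℝ) ^ (1 + s/d) := Real.rpow_pos_of_pos (by exact_mod_cast hN) _
  rw [ENNReal.ofReal_div_of_pos hNp, eCube, ENNReal.ofReal_toReal (minRiesz_ne_top d hd hs N)]
end
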